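/- arXiv:2407.18398 — 8 statements merged into one kernel-verified Lean document; each statement's English description precedes it below -/
import Mathlib

section
/- Let p be a prime, q = p^m, γ a primitive element of F_q, and t_1, ..., t_s positive integers. There exist i with 1 ≤ i ≤ q-2 and α ∈ F_p^* such that γ^{i t_1} = γ^{i t_2} = ... = γ^{i t_s} and γ^{i t_1} = -α^{-1} ∈ F_p^* if and only if gcd(q-1, t_1(p-1), t_2 - t_1, ..., t_s - t_1) > 1. -/
open Polynomial in
lemma aux_mem_prime (p : ℕ) [Fact p.Prime] (F : Type) [Field F] [Fintype F]
    [Algebra (ZMod p) F] (x : F) (hx : x ^ p = x) :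
    ∃ a : ZMod p, algebraMap (ZMod p) F a = x := by
  classical
  have hp := Fact.out (p := p.Prime)
  set φ := algebraMap (ZMod p) F with hφ
  have hinj : Function.Injective φ := (algebraMap (ZMod p) F).injective
  set f : Polynomial F := X ^ p - X with hf
  have hdeg : f.natDegree = p := by
    rw [hf, natDegree_sub_eq_left_of_natDegree_lt] <;>
      simp [natDegree_X_pow, hp.one_lt]
  have hf0 : f ≠ 0 := by
    intro h
    rw [h, natDegree_zero] at hdeg
    exact hp.pos.ne hdeg
  set S := (Finset.univ : Finset (ZMod p)).image φ with hS
  have hcardS : S.card = p := by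
    rw [hS, Finset.card_image_of_injective _ hinj, Finset.card_univ, ZMod.card]
  have hsub : S ⊆ f.roots.toFinset := by
    intro y hy
    obtain ⟨a, -, rfl⟩ := Finset.mem_image.mp hy
    rw [Multiset.mem_toFinset, mem_roots hf0]
    simp [hf, IsRoot, ← map_pow, ZMod.pow_card]
  have hcardR : f.roots.toFinset.card ≤ p := by
    calc f.roots.toFinset.card ≤ Multiset.card f.roots := Multiset.toFinset_card_le _
      _ ≤ f.natDegree := f.card_roots'
      _ = p := hdeg
  have heq : S = f.roots.toFinset :=
    Finset.eq_of_subset_of_card_le hsub (by omega)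
  have hxr : x ∈ f.roots.toFinset := by
    rw [Multiset.mem_toFinset, mem_roots hf0]
    simp [hf, IsRoot, hx]
  rw [← heq] at hxr
  obtain ⟨a, -, ha⟩ := Finset.mem_image.mp hxr
  exact ⟨a, ha⟩

/-- existence of `i`, `α` with `γ^{i t_1} = ⋯ = γ^{i t_s} = -α⁻¹ ∈ F_p^*`
iff `gcd(q-1, t_1(p-1), t_2 - t_1, …, t_s - t_1) > 1`. -/
theorem stmt_1 (p m s : ℕ) [Fact p.Prime] (hm : 0 < m)
    (F : Type) [Field F] [Fintype F] [Algebra (ZMod p) F]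
    (hcard : Fintype.card F = p ^ m)
    (γ : F) (hγ : ∀ x : F, x ≠ 0 → ∃ k : ℕ, γ ^ k = x)
    (t : Fin (s + 1) → ℕ) (ht : ∀ j, 0 < t j) :
    (∃ i : ℕ, ∃ α : ZMod p, 1 ≤ i ∧ i ≤ p ^ m - 2 ∧ α ≠ 0 ∧
        (∀ j, γ ^ (i * t j) = γ ^ (i * t 0)) ∧
        γ ^ (i * t 0) = algebraMap (ZMod p) F (-α⁻¹)) ↔
      1 < Nat.gcd (p ^ m - 1)
          (Nat.gcd (t 0 * (p - 1))
            (Finset.univ.gcd fun j : Fin (s + 1) => ((t j : ℤ) - (t 0 : ℤ)).natAbs)) := by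
  classical
  have hp := Fact.out (p := p.Prime)
  have hq2 : 2 ≤ p ^ m := by
    calc 2 = 2 ^ 1 := rfl
      _ ≤ p ^ m := Nat.pow_le_pow_left hp.two_le m |>.trans' (Nat.pow_le_pow_right (by norm_num) hm)
  by_cases hq : p ^ m = 2
  · constructor
    · rintro ⟨i, α, h1, h2, -⟩
      omega
    · intro h
      rw [hq] at h
      simp at h
  · -- main case: q ≥ 3
    have hn2 : 2 ≤ p ^ m - 1 := by omega
    set n := p ^ m - 1 with hn
    set G := Finset.univ.gcd fun j : Fin (s + 1) => ((t j : ℤ) - (t 0 : ℤ)).natAbs with hG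
    set D := Nat.gcd n (Nat.gcd (t 0 * (p - 1)) G) with hD
    -- γ ≠ 0
    have hγ0 : γ ≠ 0 := by
      obtain ⟨x0, -, hx0⟩ : ∃ x ∈ Finset.univ, x ∉ ({0, 1} : Finset F) := by
        apply Finset.exists_of_ssubset
        rw [Finset.ssubset_iff_subset_ne]
        refine ⟨Finset.subset_univ _, fun h => ?_⟩
        have h2 : ({0, 1} : Finset F).card ≤ 2 :=
          (Finset.card_insert_le _ _).trans (by simp)
        rw [h, Finset.card_univ, hcard] at h2
        omega
      simp only [Finset.mem_insert, Finset.mem_singleton, not_or] at hx0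
      obtain ⟨k, hk⟩ := hγ x0 hx0.1
      intro h0
      rcases Nat.eq_zero_or_pos k with rfl | hk0
      · exact hx0.2 (by simpa using hk.symm)
      · rw [h0, zero_pow hk0.ne'] at hk
        exact hx0.1 hk.symm
    set u : Fˣ := Units.mk0 γ hγ0 with hu
    have huv : (u : F) = γ := rfl
    have hcardU : Fintype.card Fˣ = n := by rw [Fintype.card_units, hcard]
    have hpos : 0 < orderOf u := orderOf_pos u
    have hord : orderOf u = n := by
      have hdvd : orderOf u ∣ n := hcardU ▸ orderOf_dvd_card
      have hsurj : Function.Surjective (fun k : Fin (orderOf u) => u ^ (k : ℕ)) := by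
        intro v
        obtain ⟨k, hk⟩ := hγ v (Units.ne_zero v)
        refine ⟨⟨k % orderOf u, Nat.mod_lt _ hpos⟩, ?_⟩
        apply Units.ext
        show ((u ^ (k % orderOf u) : Fˣ) : F) = v
        rw [pow_mod_orderOf, Units.val_pow_eq_pow_val, huv, hk]
      have := Fintype.card_le_of_surjective _ hsurj
      rw [hcardU, Fintype.card_fin] at this
      exact le_antisymm (Nat.le_of_dvd (by omega) hdvd) this
    have key : ∀ a b : ℕ, γ ^ a = γ ^ b ↔ n ∣ ((a : ℤ) - (b : ℤ)).natAbs := by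
      intro a b
      constructor
      · intro h
        have hu2 : u ^ a = u ^ b := Units.ext (by
          rw [Units.val_pow_eq_pow_val, Units.val_pow_eq_pow_val, huv, h])
        have := pow_eq_pow_iff_modEq.mp hu2
        rw [hord, Nat.modEq_iff_dvd] at this
        rw [← Int.natCast_dvd]
        exact dvd_sub_comm.mp this
      · intro h
        have : (n : ℤ) ∣ (b : ℤ) - (a : ℤ) := by
          rw [dvd_sub_comm, ← Int.dvd_natAbs]
          exact_mod_cast h
        have hu2 : u ^ a = u ^ b :=
          pow_eq_pow_iff_modEq.mpr (by rw [hord, Nat.modEq_iff_dvd]; exact this)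
        calc γ ^ a = ((u ^ a : Fˣ) : F) := by rw [Units.val_pow_eq_pow_val, huv]
          _ = ((u ^ b : Fˣ) : F) := by rw [hu2]
          _ = γ ^ b := by rw [Units.val_pow_eq_pow_val, huv]
    have key1 : ∀ a : ℕ, γ ^ a = 1 ↔ n ∣ a := by
      intro a
      rw [show (1 : F) = γ ^ 0 from (pow_zero γ).symm, key]
      simp
    constructor
    · -- forward
      rintro ⟨i, α, hi1, hi2, hα, hj, hα2⟩
      by_contra hcon
      have hDpos : 0 < D := by
        rcases Nat.eq_zero_or_pos D with h0 | h
        · have := Nat.eq_zero_of_gcd_eq_zero_left h0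
          omega
        · exact h
      have hD1 : D = 1 := by omega
      -- n ∣ i * (t 0 * (p-1))
      have hdiv1 : n ∣ i * (t 0 * (p - 1)) := by
        have hne : (-α⁻¹ : ZMod p) ≠ 0 := by
          simp [hα]
        have hpow : γ ^ (i * (t 0 * (p - 1))) = 1 := by
          rw [← mul_assoc, pow_mul, hα2, ← map_pow, ZMod.pow_card_sub_one_eq_one hne, map_one]
        exact (key1 _).mp hpow
      -- n ∣ i * |t j - t 0| for all j
      have hdiv2 : ∀ j, n ∣ i * ((t j : ℤ) - (t 0 : ℤ)).natAbs := by
        intro j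
        have := (key _ _).mp (hj j)
        have heq : ((i * t j : ℕ) - (i * t 0 : ℕ) : ℤ).natAbs
            = i * ((t j : ℤ) - (t 0 : ℤ)).natAbs := by
          rw [show ((i * t j : ℕ) : ℤ) - ((i * t 0 : ℕ) : ℤ)
              = (i : ℤ) * ((t j : ℤ) - (t 0 : ℤ)) by push_cast; ring,
            Int.natAbs_mul, Int.natAbs_natCast]
        rwa [heq] at this
      -- n ∣ i * G
      have hdivG : n ∣ i * G := by
        have : n ∣ Finset.univ.gcd fun j : Fin (s + 1) =>
            i * ((t j : ℤ) - (t 0 : ℤ)).natAbs :=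
          Finset.dvd_gcd fun j _ => hdiv2 j
        rwa [Finset.gcd_mul_left, normalize_eq] at this
      have hdivD : n ∣ i * Nat.gcd (t 0 * (p - 1)) G := by
        rw [← Nat.gcd_mul_left]
        exact Nat.dvd_gcd hdiv1 hdivG
      have hfinal : n ∣ i := by
        have h1 : n ∣ i * n := dvd_mul_left n i
        have h2 := Nat.dvd_gcd h1 hdivD
        rw [Nat.gcd_mul_left, ← hD, hD1, mul_one] at h2
        exact h2
      have := Nat.le_of_dvd (by omega) hfinal
      omega
    · -- backward
      intro hDgt
      have hDn : D ∣ n := Nat.gcd_dvd_left _ _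
      have hiD : (n / D) * D = n := Nat.div_mul_cancel hDn
      have hi1 : 1 ≤ n / D := Nat.div_pos (Nat.le_of_dvd (by omega) hDn) (by omega)
      have hilt : n / D < n := Nat.div_lt_self (by omega) hDgt
      have hdvdall : ∀ k : ℕ, D ∣ k → n ∣ (n / D) * k := by
        intro k hk
        obtain ⟨c, rfl⟩ := hk
        rw [← mul_assoc, hiD]
        exact Dvd.intro c rfl
      have h1 : ∀ j, γ ^ (n / D * t j) = γ ^ (n / D * t 0) := by
        intro j
        rw [key]
        have hDk : D ∣ ((t j : ℤ) - (t 0 : ℤ)).natAbs := by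
          have h1 : D ∣ G := (Nat.gcd_dvd_right n _).trans (Nat.gcd_dvd_right _ _)
          have h2 : G ∣ ((t j : ℤ) - (t 0 : ℤ)).natAbs := by
            rw [hG]
            exact Finset.gcd_dvd (Finset.mem_univ j)
          exact h1.trans h2
        have := hdvdall _ hDk
        have heq : ((n / D * t j : ℕ) - (n / D * t 0 : ℕ) : ℤ).natAbs
            = (n / D) * ((t j : ℤ) - (t 0 : ℤ)).natAbs := by
          rw [show ((n / D * t j : ℕ) : ℤ) - ((n / D * t 0 : ℕ) : ℤ)
              = ((n / D : ℕ) : ℤ) * ((t j : ℤ) - (t 0 : ℤ)) by push_cast; ring,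
            Int.natAbs_mul, Int.natAbs_natCast]
        rwa [heq]
      set x : F := γ ^ (n / D * t 0) with hx
      have hxne : x ≠ 0 := pow_ne_zero _ hγ0
      have hxpm1 : x ^ (p - 1) = 1 := by
        rw [hx, ← pow_mul, mul_assoc]
        refine (key1 _).mpr (hdvdall _ ?_)
        exact (Nat.gcd_dvd_right n _).trans (Nat.gcd_dvd_left _ _)
      have hxp : x ^ p = x := by
        have : x ^ (p - 1 + 1) = x ^ (p - 1) * x := pow_succ x (p - 1)
        rw [Nat.sub_add_cancel hp.one_le] at this
        rw [this, hxpm1, one_mul]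
      obtain ⟨β, hβ⟩ := aux_mem_prime p F x hxp
      have hβ0 : β ≠ 0 := by
        rintro rfl
        rw [map_zero] at hβ
        exact hxne hβ.symm
      refine ⟨n / D, -β⁻¹, hi1, by omega, by simp [hβ0], h1, ?_⟩
      rw [show -(-β⁻¹ : ZMod p)⁻¹ = β by rw [inv_neg, neg_neg, inv_inv], hβ]
end

section
/- Let p = 2, q = 2^m, and let C_{t_1,...,t_s} be the binary cyclic code of length n = q-1 defined by the conditions c(γ^{t_j}) = 0 for all j, where γ is a primitive element of F_q. Then C contains a codeword of weight 2 if and only if gcd(q-1, t_1, t_2, ..., t_s) > 1. -/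
section Aux

variable {F : Type} [Field F] [Fintype F]

lemma aux_gamma_ne_zero {γ : F} (h3 : 3 ≤ Fintype.card F)
    (hγ : ∀ x : F, x ≠ 0 → ∃ k : ℕ, γ ^ k = x) : γ ≠ 0 := by
  classical
  intro h0
  have hss : ({0, 1} : Finset F) ⊂ Finset.univ := by
    apply Finset.ssubset_univ_iff.mpr
    intro h
    have : Fintype.card F ≤ 2 := by
      rw [← Finset.card_univ, ← h]
      exact le_trans (Finset.card_insert_le _ _) (by simp)
    omega
  obtain ⟨x, -, hx⟩ := Finset.exists_of_ssubset hss
  simp only [Finset.mem_insert, Finset.mem_singleton, not_or] at hx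
  obtain ⟨k, hk⟩ := hγ x hx.1
  rcases Nat.eq_zero_or_pos k with hk0 | hk0
  · subst hk0; simp at hk; exact hx.2 hk.symm
  · rw [h0, zero_pow (by omega)] at hk
    exact hx.1 hk.symm

lemma aux_pow_eq_one_iff {γ : F} (h3 : 3 ≤ Fintype.card F)
    (hγ : ∀ x : F, x ≠ 0 → ∃ k : ℕ, γ ^ k = x) (e : ℕ) :
    γ ^ e = 1 ↔ (Fintype.card F - 1) ∣ e := by
  classical
  have hγ0 : γ ≠ 0 := aux_gamma_ne_zero h3 hγ
  set u : Fˣ := Units.mk0 γ hγ0 with hu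
  have hupow : ∀ k : ℕ, ((u ^ k : Fˣ) : F) = γ ^ k := by intro k; simp [hu]
  have hord : orderOf u = Fintype.card Fˣ := by
    rw [← Nat.card_eq_fintype_card]
    apply orderOf_eq_card_of_forall_mem_zpowers
    intro x
    obtain ⟨k, hk⟩ := hγ (x : F) x.ne_zero
    refine ⟨(k : ℤ), Units.ext ?_⟩
    show ((u ^ (k : ℤ) : Fˣ) : F) = (x : F)
    rw [zpow_natCast, hupow k, hk]
  have hcardu : Fintype.card Fˣ = Fintype.card F - 1 := Fintype.card_units F
  constructor
  · intro h
    have : u ^ e = 1 := by apply Units.ext; rw [hupow, h]; rfl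
    have := orderOf_dvd_of_pow_eq_one this
    rwa [hord, hcardu] at this
  · intro h
    have : orderOf u ∣ e := by rwa [hord, hcardu]
    have : u ^ e = 1 := orderOf_dvd_iff_pow_eq_one.mp this
    have := congrArg (Units.val) this
    rwa [hupow] at this

end Aux

/-- a binary cyclic code `C_{t_1,…,t_s}` of length `2^m - 1` contains a
weight-2 codeword iff `gcd(2^m - 1, t_1, …, t_s) > 1`. -/
theorem stmt_3 (m s : ℕ) (hm : 0 < m)
    (F : Type) [Field F] [Fintype F] [Algebra (ZMod 2) F]
    (hcard : Fintype.card F = 2 ^ m)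
    (γ : F) (hγ : ∀ x : F, x ≠ 0 → ∃ k : ℕ, γ ^ k = x)
    (t : Fin (s + 1) → ℕ)
    (n : ℕ) (hn : n = 2 ^ m - 1) :
    (∃ c : Fin n → ZMod 2,
        (∀ j, ∑ i : Fin n, algebraMap (ZMod 2) F (c i) * γ ^ (t j * (i : ℕ)) = 0) ∧
        (Finset.univ.filter fun i => c i ≠ 0).card = 2) ↔
      1 < Nat.gcd (2 ^ m - 1) (Finset.univ.gcd t) := by
  classical
  haveI : CharP F 2 := charP_of_injective_algebraMap (algebraMap (ZMod 2) F).injective 2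
  have h2m : 2 ≤ 2 ^ m := by
    calc (2:ℕ) = 2 ^ 1 := by norm_num
    _ ≤ 2 ^ m := Nat.pow_le_pow_right (by norm_num) hm
  have hn1 : 1 ≤ n := by omega
  have hcard' : Fintype.card F - 1 = n := by omega
  have hzmod : ∀ x : ZMod 2, x = 0 ∨ x = 1 := by decide
  rw [show (2:ℕ) ^ m - 1 = n from hn.symm]
  set G := Finset.univ.gcd t with hG
  constructor
  · rintro ⟨c, hsum, hw⟩
    obtain ⟨a, b, hab, hset⟩ := Finset.card_eq_two.mp hw
    have hmem : ∀ i : Fin n, c i ≠ 0 ↔ i = a ∨ i = b := by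
      intro i
      have : i ∈ Finset.univ.filter (fun i => c i ≠ 0) ↔ i ∈ ({a, b} : Finset (Fin n)) := by
        rw [hset]
      simpa using this
    have hca : c a = 1 := by
      rcases hzmod (c a) with h | h
      · exact absurd (Or.inl rfl) (by rw [← hmem]; simp [h])
      · exact h
    have hcb : c b = 1 := by
      rcases hzmod (c b) with h | h
      · exact absurd (Or.inr rfl) (by rw [← hmem]; simp [h])
      · exact h
    have hzero : ∀ i : Fin n, i ≠ a → i ≠ b → c i = 0 := by
      intro i hia hib
      by_contra h
      rcases (hmem i).mp h with h' | h' <;> [exact hia h'; exact hib h']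
    -- n ≥ 2 since Fin n has two distinct elements
    have hn2 : 2 ≤ n := by
      have := a.isLt; have := b.isLt
      have : (a : ℕ) ≠ (b : ℕ) := fun h => hab (Fin.ext h)
      omega
    have h3 : 3 ≤ Fintype.card F := by omega
    have hγ0 : γ ≠ 0 := aux_gamma_ne_zero h3 hγ
    -- reduce the sum to two terms
    have hsum2 : ∀ j, γ ^ (t j * (a : ℕ)) + γ ^ (t j * (b : ℕ)) = 0 := by
      intro j
      have h1 : ∑ i : Fin n, algebraMap (ZMod 2) F (c i) * γ ^ (t j * (i : ℕ))
          = ∑ i ∈ ({a, b} : Finset (Fin n)),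
              algebraMap (ZMod 2) F (c i) * γ ^ (t j * (i : ℕ)) := by
        refine (Finset.sum_subset (Finset.subset_univ _) ?_).symm
        intro i _ hi
        simp only [Finset.mem_insert, Finset.mem_singleton, not_or] at hi
        rw [hzero i hi.1 hi.2, map_zero, zero_mul]
      have h := hsum j
      rw [h1, Finset.sum_pair hab, hca, hcb, map_one, one_mul, one_mul] at h
      exact h
    have heq : ∀ j, γ ^ (t j * (a : ℕ)) = γ ^ (t j * (b : ℕ)) := by
      intro j
      have h := hsum2 j
      exact (eq_neg_of_add_eq_zero_left h).trans (CharTwo.neg_eq _)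
    -- wlog: get x > y with the property
    obtain ⟨x, y, hyx, hxn, hxy⟩ :
        ∃ x y : ℕ, y < x ∧ x < n ∧ ∀ j, γ ^ (t j * x) = γ ^ (t j * y) := by
      rcases Nat.lt_or_ge (a : ℕ) (b : ℕ) with h | h
      · exact ⟨b, a, h, b.isLt, fun j => (heq j).symm⟩
      · have : (a : ℕ) ≠ (b : ℕ) := fun h => hab (Fin.ext h)
        exact ⟨a, b, by omega, a.isLt, heq⟩
    set d := x - y with hd
    have hone : ∀ j, γ ^ (t j * d) = 1 := by
      intro j
      have hsplit : t j * x = t j * y + t j * d := by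
        rw [← Nat.left_distrib]; congr 1; omega
      have h := hxy j
      rw [hsplit, pow_add] at h
      have := mul_left_cancel₀ (pow_ne_zero (t j * y) hγ0) (h.trans (mul_one _).symm)
      exact this
    have hdvd : ∀ j, n ∣ t j * d := by
      intro j
      have := (aux_pow_eq_one_iff h3 hγ (t j * d)).mp (hone j)
      rwa [hcard'] at this
    -- now conclude
    by_contra hcon
    push_neg at hcon
    have hgpos : 0 < Nat.gcd n G := Nat.gcd_pos_of_pos_left G (by omega)
    have hcop : Nat.Coprime n G := by
      unfold Nat.Coprime; omega
    have hdG : n ∣ Finset.univ.gcd (fun j => t j * d) :=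
      Finset.dvd_gcd (fun j _ => hdvd j)
    rw [Finset.gcd_mul_right] at hdG
    simp only [normalize_eq] at hdG
    rw [mul_comm] at hdG
    have : n ∣ d := hcop.dvd_of_dvd_mul_right (by rwa [← hG] at hdG)
    have := Nat.le_of_dvd (by omega) this
    omega
  · intro hgcd
    set g := Nat.gcd n G with hg
    have hgn : g ∣ n := Nat.gcd_dvd_left n G
    have hn2 : 2 ≤ n := by
      by_contra h
      have hn1' : n = 1 := by omega
      rw [hg, hn1', Nat.gcd_one_left] at hgcd
      omega
    set d := n / g with hd
    have hgd : g * d = n := Nat.mul_div_cancel' hgn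
    have hdpos : 0 < d := Nat.div_pos (Nat.le_of_dvd (by omega) hgn) (by omega)
    have hdn : d < n := Nat.div_lt_self (by omega) hgcd
    have h3 : 3 ≤ Fintype.card F := by omega
    have hγ0 : γ ≠ 0 := aux_gamma_ne_zero h3 hγ
    have hγn : γ ^ n = 1 := by
      have := FiniteField.pow_card_sub_one_eq_one γ hγ0
      rwa [hcard'] at this
    set a0 : Fin n := ⟨0, by omega⟩ with ha0
    set ad : Fin n := ⟨d, by omega⟩ with had
    have hne : a0 ≠ ad := by
      intro h
      have := congrArg Fin.val h
      simp [ha0, had] at this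
      omega
    refine ⟨fun i => if i = a0 ∨ i = ad then 1 else 0, ?_, ?_⟩
    · intro j
      have hcond : ∀ i : Fin n, i ≠ a0 → i ≠ ad →
          algebraMap (ZMod 2) F (if i = a0 ∨ i = ad then (1:ZMod 2) else 0) *
            γ ^ (t j * (i : ℕ)) = 0 := by
        intro i h1 h2
        rw [if_neg (by tauto), map_zero, zero_mul]
      have hsub : ∑ i : Fin n,
          algebraMap (ZMod 2) F (if i = a0 ∨ i = ad then (1:ZMod 2) else 0) *
            γ ^ (t j * (i : ℕ))
          = ∑ i ∈ ({a0, ad} : Finset (Fin n)),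
          algebraMap (ZMod 2) F (if i = a0 ∨ i = ad then (1:ZMod 2) else 0) *
            γ ^ (t j * (i : ℕ)) := by
        refine (Finset.sum_subset (Finset.subset_univ _) ?_).symm
        intro i _ hi
        simp only [Finset.mem_insert, Finset.mem_singleton, not_or] at hi
        exact hcond i hi.1 hi.2
      rw [hsub, Finset.sum_pair hne]
      rw [if_pos (Or.inl rfl), if_pos (Or.inr rfl), map_one, one_mul, one_mul]
      have hta : (a0 : ℕ) = 0 := rfl
      have htd : (ad : ℕ) = d := rfl
      rw [hta, htd, Nat.mul_zero, pow_zero]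
      have hGt : G ∣ t j := Finset.gcd_dvd (Finset.mem_univ j)
      have hgt : g ∣ t j := dvd_trans (Nat.gcd_dvd_right n G) hGt
      obtain ⟨e, he⟩ := hgt
      have : t j * d = n * e := by rw [he]; rw [← hgd]; ring
      rw [this, pow_mul, hγn, one_pow]
      exact CharTwo.add_self_eq_zero 1
    · have : (Finset.univ.filter fun i => (if i = a0 ∨ i = ad then (1:ZMod 2) else 0) ≠ 0)
          = {a0, ad} := by
        ext i
        simp only [Finset.mem_filter, Finset.mem_univ, true_and, Finset.mem_insert,
          Finset.mem_singleton]
        by_cases h : i = a0 ∨ i = ad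
        · rw [if_pos h]; exact ⟨fun _ => h, fun _ => one_ne_zero⟩
        · rw [if_neg h]; exact ⟨fun hc => absurd rfl hc, fun hc => absurd hc h⟩
      rw [this, Finset.card_pair hne]
end

section
/- Let p be an odd prime, m a positive integer, g a divisor of m, and let t_1, ..., t_s be integers that all lie in the p-cyclotomic coset K_g(t) of some t ≢ 0 (mod p^g - 1), but do not all lie in a single p-cyclotomic coset modulo p^m - 1. Then the cyclic code C_{t_1,...,t_s} of length p^m - 1 over F_p contains a codeword of Hamming weight at most 3 (in fact of weight exactly 3 or 2), so its minimum distance is at most 3. -/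
lemma aux_mem_range_algebraMap {p : ℕ} [Fact p.Prime] {F : Type} [Field F]
    [Algebra (ZMod p) F] {b : F} (hb : b ^ p = b) :
    ∃ a : ZMod p, algebraMap (ZMod p) F a = b := by
  classical
  have hp1 : 1 < p := (Fact.out : p.Prime).one_lt
  set f : Polynomial F := Polynomial.X ^ p - Polynomial.X with hf
  have hf0 : f ≠ 0 := FiniteField.X_pow_card_sub_X_ne_zero F hp1
  have hdeg : f.natDegree = p := FiniteField.X_pow_card_sub_X_natDegree_eq F hp1
  by_contra h
  push_neg at h
  have hinj : Function.Injective (algebraMap (ZMod p) F) :=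
    (algebraMap (ZMod p) F).injective
  set Z : Finset F := insert b (Finset.univ.image (algebraMap (ZMod p) F)) with hZ
  have hbmem : b ∉ Finset.univ.image (algebraMap (ZMod p) F) := by
    simp only [Finset.mem_image, Finset.mem_univ, true_and]
    rintro ⟨a, ha⟩
    exact h a ha
  have hcardZ : Z.card = p + 1 := by
    rw [hZ, Finset.card_insert_of_notMem hbmem,
      Finset.card_image_of_injective _ hinj, Finset.card_univ, ZMod.card]
  have hsub : Z.val ⊆ f.roots := by
    intro x hx
    have hx' : x ∈ Z := hx
    have hroot : x ^ p = x := by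
      rw [hZ, Finset.mem_insert] at hx'
      rcases hx' with rfl | hx'
      · exact hb
      · simp only [Finset.mem_image, Finset.mem_univ, true_and] at hx'
        obtain ⟨a, rfl⟩ := hx'
        rw [← map_pow, ZMod.pow_card]
    rw [Polynomial.mem_roots hf0]
    simp [hf, Polynomial.IsRoot, sub_eq_zero, hroot]
  have := Polynomial.card_le_degree_of_subset_roots hsub
  omega

/-- for odd `p`, if `t_1,…,t_s` all lie in `K_g(t)` for some `g ∣ m` and
`t ≢ 0 (mod p^g - 1)`, but do not all lie in one `p`-cyclotomic coset mod `p^m - 1`,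
then `C_{t_1,…,t_s}` contains a codeword of weight `3` or `2` (so its minimum
distance is at most `3`). -/
theorem stmt_4 (p m g s : ℕ) [Fact p.Prime] (hp : Odd p) (hm : 0 < m)
    (hg : 0 < g) (hgm : g ∣ m)
    (F : Type) [Field F] [Fintype F] [Algebra (ZMod p) F]
    (hcard : Fintype.card F = p ^ m)
    (γ : F) (hγ : ∀ x : F, x ≠ 0 → ∃ k : ℕ, γ ^ k = x)
    (t : Fin (s + 1) → ℕ) (t0 : ℕ) (ht0 : ¬ (p ^ g - 1) ∣ t0)
    (hin : ∀ j, ∃ k : ℕ, t j ≡ t0 * p ^ k [MOD p ^ g - 1])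
    (hnot : ¬ ∃ u : ℕ, ∀ j, ∃ k : ℕ, t j ≡ u * p ^ k [MOD p ^ m - 1])
    (n : ℕ) (hn : n = p ^ m - 1) :
    ∃ c : Fin n → ZMod p,
      (∀ j, ∑ i : Fin n, algebraMap (ZMod p) F (c i) * γ ^ (t j * (i : ℕ)) = 0) ∧
      ((Finset.univ.filter fun i => c i ≠ 0).card = 3 ∨
        (Finset.univ.filter fun i => c i ≠ 0).card = 2) := by
  classical
  have hprime : p.Prime := Fact.out
  have hp2 : p ≠ 2 := by
    rintro rfl
    simp [Nat.odd_iff] at hp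
  have hp3 : 3 ≤ p := by
    have := hprime.two_le
    omega
  -- basic size facts
  have hpm : 3 ≤ p ^ m := by
    calc 3 ≤ p := hp3
    _ = p ^ 1 := (pow_one p).symm
    _ ≤ p ^ m := Nat.pow_le_pow_right (by omega) hm
  have hn2 : 2 ≤ n := by omega
  -- p - 1 divides p ^ m - 1
  have hdvd_m : p - 1 ∣ p ^ m - 1 := by
    have := Nat.sub_dvd_pow_sub_pow p 1 m
    simpa using this
  have hdvd_g : p - 1 ∣ p ^ g - 1 := by
    have := Nat.sub_dvd_pow_sub_pow p 1 g
    simpa using this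
  set i1 : ℕ := (p ^ m - 1) / (p - 1) with hi1
  have hi1mul : (p - 1) * i1 = p ^ m - 1 := Nat.mul_div_cancel' hdvd_m
  have hi1pos : 0 < i1 := by
    rcases Nat.eq_zero_or_pos i1 with h | h
    · rw [h, Nat.mul_zero] at hi1mul; omega
    · exact h
  have hi1lt : i1 < n := by
    by_contra h
    push_neg at h
    have : (p - 1) * i1 ≥ 2 * n := by
      calc (p - 1) * i1 ≥ 2 * i1 := Nat.mul_le_mul_right _ (by omega)
      _ ≥ 2 * n := Nat.mul_le_mul_left _ h
    omega
  -- γ is nonzero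
  have hγ0 : γ ≠ 0 := by
    intro hγz
    have hall : ∀ x : F, x = 0 ∨ x = 1 := by
      intro x
      by_cases hx : x = 0
      · exact Or.inl hx
      · obtain ⟨k, hk⟩ := hγ x hx
        cases k with
        | zero => right; simpa using hk.symm
        | succ k =>
          exfalso; apply hx
          rw [← hk, hγz, zero_pow (Nat.succ_ne_zero k)]
    have hcard2 : Fintype.card F ≤ ({0, 1} : Finset F).card := by
      apply Finset.card_le_card
      intro x _
      rcases hall x with rfl | rfl <;> simp
    have : ({0, 1} : Finset F).card ≤ 2 := Finset.card_insert_le _ _ |>.trans (by simp)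
    omega
  -- γ ^ (p^m - 1) = 1
  have hγ1 : γ ^ (p ^ m - 1) = 1 := by
    have := FiniteField.pow_card_sub_one_eq_one γ hγ0
    rwa [hcard] at this
  set y : F := γ ^ i1 with hy
  have hy0 : y ≠ 0 := pow_ne_zero _ hγ0
  have hyp1 : y ^ (p - 1) = 1 := by
    rw [hy, ← pow_mul, Nat.mul_comm, hi1mul, hγ1]
  -- y ^ a depends only on a mod (p-1)
  have hmod : ∀ a b : ℕ, a ≡ b [MOD p - 1] → y ^ a = y ^ b := by
    intro a b hab
    rw [pow_eq_pow_mod a hyp1, pow_eq_pow_mod b hyp1, hab]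
  set b : F := y ^ t0 with hb
  have hb0 : b ≠ 0 := pow_ne_zero _ hy0
  have hpmod : (1 : ℕ) ≡ p [MOD p - 1] := by
    rw [Nat.modEq_iff_dvd' (by omega)]
  have hbp : b ^ p = b := by
    rw [hb, ← pow_mul]
    apply hmod
    calc t0 * p ≡ t0 * 1 [MOD p - 1] := (Nat.ModEq.mul_left t0 hpmod).symm
    _ = t0 := Nat.mul_one t0
  obtain ⟨a, ha⟩ := aux_mem_range_algebraMap hbp
  have ha0 : a ≠ 0 := by
    rintro rfl
    rw [map_zero] at ha
    exact hb0 ha.symm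
  have hbpk : ∀ k : ℕ, b ^ p ^ k = b := by
    intro k
    induction k with
    | zero => simp
    | succ k ih => rw [pow_succ, pow_mul, ih, hbp]
  -- y ^ (t j) = b for all j
  have hyt : ∀ j, y ^ t j = b := by
    intro j
    obtain ⟨k, hk⟩ := hin j
    have hk' : t j ≡ t0 * p ^ k [MOD p - 1] := hk.of_dvd hdvd_g
    rw [hmod _ _ hk', pow_mul, ← hb, hbpk]
  -- the codeword
  set i0 : Fin n := ⟨0, by omega⟩ with hi0
  set iX : Fin n := ⟨i1, hi1lt⟩ with hiX
  have hne : i0 ≠ iX := by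
    intro h
    have := congrArg (Fin.val) h
    simp [hi0, hiX] at this
    omega
  refine ⟨fun i => if i = i0 then a else if i = iX then -1 else 0, ?_, ?_⟩
  · intro j
    have hzero : ∀ i ∈ Finset.univ, i ∉ ({i0, iX} : Finset (Fin n)) →
        algebraMap (ZMod p) F (if i = i0 then a else if i = iX then -1 else 0)
          * γ ^ (t j * (i : ℕ)) = 0 := by
      intro i _ hi
      simp only [Finset.mem_insert, Finset.mem_singleton, not_or] at hi
      rw [if_neg hi.1, if_neg hi.2, map_zero, zero_mul]
    rw [← Finset.sum_subset (Finset.subset_univ ({i0, iX} : Finset (Fin n))) hzero,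
      Finset.sum_pair hne]
    rw [if_pos rfl, if_neg (Ne.symm hne), if_pos rfl]
    have h1 : (i0 : ℕ) = 0 := rfl
    have h2 : (iX : ℕ) = i1 := rfl
    rw [h1, h2, Nat.mul_zero, pow_zero, mul_one, ha, map_neg, map_one, neg_one_mul,
      Nat.mul_comm, pow_mul, ← hy, hyt j]
    ring
  · right
    have hfilter : (Finset.univ.filter fun i =>
        (if i = i0 then a else if i = iX then -1 else 0) ≠ 0) = {i0, iX} := by
      ext i
      simp only [Finset.mem_filter, Finset.mem_univ, true_and, Finset.mem_insert,
        Finset.mem_singleton]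
      by_cases h1 : i = i0
      · simp [h1, ha0]
      · by_cases h2 : i = iX
        · simp [h1, h2, (Ne.symm hne : iX ≠ i0)]
        · simp [h1, h2]
    rw [hfilter, Finset.card_insert_of_notMem (by simp [hne]), Finset.card_singleton]
end

section
/- Let p be an odd prime, g a positive integer, and β a primitive element of F_{p^g}. The number of tuples (a, b, i, j) with a, b ∈ F_p^*, 1 ≤ i, j ≤ p^g - 2, i ≠ j, satisfying 1 + a·β^i + b·β^j = 0 equals (p-1)^2 (p^g - 2) - (p-2)(3p - 5). -/
set_option linter.unusedSectionVars false
set_option maxHeartbeats 1000000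

open Finset

section Inner
variable {F : Type} [Field F] [Fintype F] [DecidableEq F]
variable {F : Type} [Field F] [Fintype F] [DecidableEq F]

lemma card3' (x y z : F) (hxy : x ≠ y) (hxz : x ≠ z) (hyz : y ≠ z) :
    ({x, y, z} : Finset F).card = 3 := by
  rw [Finset.card_insert_of_notMem (by simp [hxy, hxz]),
      Finset.card_insert_of_notMem (by simp [hyz]), Finset.card_singleton]

lemma card4' (x y z w : F) (hxy : x ≠ y) (hxz : x ≠ z) (hxw : x ≠ w)
    (hyz : y ≠ z) (hyw : y ≠ w) (hzw : z ≠ w) :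
    ({x, y, z, w} : Finset F).card = 4 := by
  rw [Finset.card_insert_of_notMem (by simp [hxy, hxz, hxw]),
      card3' _ _ _ hyz hyw hzw]

lemma card5' (x y z w v : F) (hxy : x ≠ y) (hxz : x ≠ z) (hxw : x ≠ w) (hxv : x ≠ v)
    (hyz : y ≠ z) (hyw : y ≠ w) (hyv : y ≠ v) (hzw : z ≠ w) (hzv : z ≠ v) (hwv : w ≠ v) :
    ({x, y, z, w, v} : Finset F).card = 5 := by
  rw [Finset.card_insert_of_notMem (by simp [hxy, hxz, hxw, hxv]),
      card4' _ _ _ _ hyz hyw hyv hzw hzv hwv]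

lemma lin_root (d c : F) (hd : d ≠ 0) : ∃ x, ∀ u : F, c + d*u = 0 ↔ u = x := by
  refine ⟨-c/d, fun u => ?_⟩
  rw [eq_div_iff hd]; constructor <;> intro h <;> linear_combination h

lemma bad_count (h2 : (2:F) ≠ 0) (A B : F) (hA : A ≠ 0) (hB : B ≠ 0) :
    ((univ.filter (fun u : F => u = 0 ∨ u = 1 ∨ 1 + A*u = 0 ∨ 1 + A*u + B = 0 ∨ 1 + (A+B)*u = 0)).card : ℤ)
      = 5 - ((if A = -1 then 1 else 0) + (if B = -1 then 1 else 0)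
        + 2 * (if A + B = -1 then 1 else 0) + (if A + B = 0 then 1 else 0)) := by
  have h10 : (1:F) ≠ 0 := one_ne_zero
  have hm11 : (-1 : F) ≠ 1 := by intro h; apply h2; linear_combination -h
  obtain ⟨x3, hx3⟩ : ∃ x, ∀ u : F, 1 + A*u = 0 ↔ u = x := lin_root A 1 hA
  have P3 : 1 + A*x3 = 0 := (hx3 x3).mpr rfl
  obtain ⟨x4, hx4⟩ : ∃ x, ∀ u : F, 1 + A*u + B = 0 ↔ u = x := by
    obtain ⟨x, hx⟩ := lin_root A (1+B) hA
    exact ⟨x, fun u => by rw [← hx u]; constructor <;> intro h <;> linear_combination h⟩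
  have P4 : 1 + A*x4 + B = 0 := (hx4 x4).mpr rfl
  have hne0x3 : (0:F) ≠ x3 := fun h => h10 (by linear_combination P3 + A*h)
  by_cases hAB0 : A + B = 0
  · have h5 : ∀ u : F, (1 + (A+B)*u = 0) ↔ False := by intro u; rw [hAB0]; simp
    have hABm1 : ¬ (A + B = -1) := fun h => h10 (by linear_combination h - hAB0)
    by_cases hA1 : A = 1
    · have hBm1 : B = -1 := by linear_combination hAB0 - hA1
      have hAm1 : ¬ (A = -1) := fun h => h2 (by linear_combination h - hA1)
      have hx3v : x3 = -1 := ((hx3 (-1)).mp (by linear_combination -hA1)).symm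
      have hx4v : x4 = 0 := ((hx4 0).mp (by linear_combination hBm1)).symm
      have hset : (univ.filter (fun u : F => u = 0 ∨ u = 1 ∨ 1 + A*u = 0 ∨ 1 + A*u + B = 0 ∨ 1 + (A+B)*u = 0))
          = ({0, 1, -1} : Finset F) := by
        ext u
        simp only [Finset.mem_filter, Finset.mem_univ, true_and, hx3, hx4, h5,
          Finset.mem_insert, Finset.mem_singleton, hx3v, hx4v]
        tauto
      rw [hset, card3' _ _ _ (by simp) (fun h => h10 (by linear_combination h)) hm11.symm]
      rw [if_neg hAm1, if_pos hBm1, if_neg hABm1, if_pos hAB0]; norm_num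
    · by_cases hAm1 : A = -1
      · have hB1 : B = 1 := by linear_combination hAB0 - hAm1
        have hBm1 : ¬ (B = -1) := fun h => h2 (by linear_combination h - hB1)
        have hx3v : x3 = 1 := ((hx3 1).mp (by linear_combination hAm1)).symm
        have hx4v : x4 = 2 := ((hx4 2).mp (by linear_combination 2*hAm1 + hB1)).symm
        have hset : (univ.filter (fun u : F => u = 0 ∨ u = 1 ∨ 1 + A*u = 0 ∨ 1 + A*u + B = 0 ∨ 1 + (A+B)*u = 0))
            = ({0, 1, 2} : Finset F) := by
          ext u
          simp only [Finset.mem_filter, Finset.mem_univ, true_and, hx3, hx4, h5,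
            Finset.mem_insert, Finset.mem_singleton, hx3v, hx4v]
          tauto
        rw [hset, card3' _ _ _ (by simp) (fun h => h2 h.symm) (fun h => h10 (by linear_combination -h))]
        rw [if_pos hAm1, if_neg hBm1, if_neg hABm1, if_pos hAB0]; norm_num
      · have hBm1 : ¬ (B = -1) := fun h => hA1 (by linear_combination hAB0 - h)
        have hset : (univ.filter (fun u : F => u = 0 ∨ u = 1 ∨ 1 + A*u = 0 ∨ 1 + A*u + B = 0 ∨ 1 + (A+B)*u = 0))
            = ({0, 1, x3, x4} : Finset F) := by
          ext u
          simp only [Finset.mem_filter, Finset.mem_univ, true_and, hx3, hx4, h5,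
            Finset.mem_insert, Finset.mem_singleton]
          tauto
        rw [hset, card4' _ _ _ _ (by simp) hne0x3
          (fun h => hBm1 (by linear_combination P4 + A*h))
          (fun h => hAm1 (by linear_combination P3 + A*h))
          (fun h => h10 (by linear_combination P4 + A*h - hAB0))
          (fun h => hB (by linear_combination P4 - P3 + A*h))]
        rw [if_neg hAm1, if_neg hBm1, if_neg hABm1, if_pos hAB0]; norm_num
  · obtain ⟨x5, hx5⟩ : ∃ x, ∀ u : F, 1 + (A+B)*u = 0 ↔ u = x := lin_root (A+B) 1 hAB0
    have P5 : 1 + (A+B)*x5 = 0 := (hx5 x5).mpr rfl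
    have hne0x5 : (0:F) ≠ x5 := fun h => h10 (by linear_combination P5 + (A+B)*h)
    by_cases hABm1 : A + B = -1
    · have hAm1 : ¬ (A = -1) := fun h => hB (by linear_combination hABm1 - h)
      have hBm1 : ¬ (B = -1) := fun h => hA (by linear_combination hABm1 - h)
      have hx4v : x4 = 1 := ((hx4 1).mp (by linear_combination hABm1)).symm
      have hx5v : x5 = 1 := ((hx5 1).mp (by linear_combination hABm1)).symm
      have hset : (univ.filter (fun u : F => u = 0 ∨ u = 1 ∨ 1 + A*u = 0 ∨ 1 + A*u + B = 0 ∨ 1 + (A+B)*u = 0))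
          = ({0, 1, x3} : Finset F) := by
        ext u
        simp only [Finset.mem_filter, Finset.mem_univ, true_and, hx3, hx4, hx5,
          Finset.mem_insert, Finset.mem_singleton, hx4v, hx5v]
        tauto
      rw [hset, card3' _ _ _ (by simp) hne0x3
        (fun h => hB (by linear_combination hABm1 - P3 - A*h))]
      rw [if_neg hAm1, if_neg hBm1, if_pos hABm1, if_neg hAB0]; norm_num
    · have hne1x5 : (1:F) ≠ x5 := fun h => hABm1 (by linear_combination P5 + (A+B)*h)
      have hnex3x5 : x3 ≠ x5 := by
        intro h
        have hb5 : B * x5 = 0 := by linear_combination P5 - P3 + A*h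
        rcases mul_eq_zero.1 hb5 with h' | h'
        · exact hB h'
        · exact hne0x5 h'.symm
      have hnex4x5 : x4 ≠ x5 := by
        intro h
        have hb5 : B * (x5 - 1) = 0 := by linear_combination P5 - P4 + A*h
        rcases mul_eq_zero.1 hb5 with h' | h'
        · exact hB h'
        · exact hABm1 (by linear_combination P5 - (A+B)*h')
      by_cases hAm1 : A = -1
      · have hx3v : x3 = 1 := ((hx3 1).mp (by linear_combination hAm1)).symm
        by_cases hBm1 : B = -1
        · have hx4v : x4 = 0 := ((hx4 0).mp (by linear_combination hBm1)).symm
          have hset : (univ.filter (fun u : F => u = 0 ∨ u = 1 ∨ 1 + A*u = 0 ∨ 1 + A*u + B = 0 ∨ 1 + (A+B)*u = 0))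
              = ({0, 1, x5} : Finset F) := by
            ext u
            simp only [Finset.mem_filter, Finset.mem_univ, true_and, hx3, hx4, hx5,
              Finset.mem_insert, Finset.mem_singleton, hx3v, hx4v]
            tauto
          rw [hset, card3' _ _ _ (by simp) hne0x5 hne1x5]
          rw [if_pos hAm1, if_pos hBm1, if_neg hABm1, if_neg hAB0]; norm_num
        · have hset : (univ.filter (fun u : F => u = 0 ∨ u = 1 ∨ 1 + A*u = 0 ∨ 1 + A*u + B = 0 ∨ 1 + (A+B)*u = 0))
              = ({0, 1, x4, x5} : Finset F) := by
            ext u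
            simp only [Finset.mem_filter, Finset.mem_univ, true_and, hx3, hx4, hx5,
              Finset.mem_insert, Finset.mem_singleton, hx3v]
            tauto
          rw [hset, card4' _ _ _ _ (by simp)
            (fun h => hBm1 (by linear_combination P4 + A*h))
            hne0x5
            (fun h => hABm1 (by linear_combination P4 + A*h))
            hne1x5 hnex4x5]
          rw [if_pos hAm1, if_neg hBm1, if_neg hABm1, if_neg hAB0]; norm_num
      · by_cases hBm1 : B = -1
        · have hx4v : x4 = 0 := ((hx4 0).mp (by linear_combination hBm1)).symm
          have hset : (univ.filter (fun u : F => u = 0 ∨ u = 1 ∨ 1 + A*u = 0 ∨ 1 + A*u + B = 0 ∨ 1 + (A+B)*u = 0))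
              = ({0, 1, x3, x5} : Finset F) := by
            ext u
            simp only [Finset.mem_filter, Finset.mem_univ, true_and, hx3, hx4, hx5,
              Finset.mem_insert, Finset.mem_singleton, hx4v]
            tauto
          rw [hset, card4' _ _ _ _ (by simp) hne0x3 hne0x5
            (fun h => hAm1 (by linear_combination P3 + A*h))
            hne1x5 hnex3x5]
          rw [if_neg hAm1, if_pos hBm1, if_neg hABm1, if_neg hAB0]; norm_num
        · have hset : (univ.filter (fun u : F => u = 0 ∨ u = 1 ∨ 1 + A*u = 0 ∨ 1 + A*u + B = 0 ∨ 1 + (A+B)*u = 0))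
              = ({0, 1, x3, x4, x5} : Finset F) := by
            ext u
            simp only [Finset.mem_filter, Finset.mem_univ, true_and, hx3, hx4, hx5,
              Finset.mem_insert, Finset.mem_singleton]
          rw [hset, card5' _ _ _ _ _ (by simp) hne0x3
            (fun h => hBm1 (by linear_combination P4 + A*h))
            hne0x5
            (fun h => hAm1 (by linear_combination P3 + A*h))
            (fun h => hABm1 (by linear_combination P4 + A*h))
            hne1x5
            (fun h => hB (by linear_combination P4 - P3 + A*h))
            hnex3x5 hnex4x5]
          rw [if_neg hAm1, if_neg hBm1, if_neg hABm1, if_neg hAB0]; norm_num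

theorem inner_count (h2 : (2:F) ≠ 0) (A B : F) (hA : A ≠ 0) (hB : B ≠ 0) :
    ((Finset.univ.filter (fun u : F =>
        u ≠ 0 ∧ u ≠ 1 ∧ 1 + A*u ≠ 0 ∧ 1 + A*u + B ≠ 0 ∧ 1 + (A+B)*u ≠ 0)).card : ℤ)
      = (Fintype.card F : ℤ) - 5 + (if A = -1 then 1 else 0) + (if B = -1 then 1 else 0)
        + 2 * (if A + B = -1 then 1 else 0) + (if A + B = 0 then 1 else 0) := by
  have hsplit := Finset.card_filter_add_card_filter_not
    (s := (univ : Finset F)) (p := fun u : F =>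
        u ≠ 0 ∧ u ≠ 1 ∧ 1 + A*u ≠ 0 ∧ 1 + A*u + B ≠ 0 ∧ 1 + (A+B)*u ≠ 0)
  rw [Finset.card_univ] at hsplit
  have hneg : (univ.filter (fun u : F => ¬(u ≠ 0 ∧ u ≠ 1 ∧ 1 + A*u ≠ 0 ∧ 1 + A*u + B ≠ 0 ∧ 1 + (A+B)*u ≠ 0)))
      = univ.filter (fun u : F => u = 0 ∨ u = 1 ∨ 1 + A*u = 0 ∨ 1 + A*u + B = 0 ∨ 1 + (A+B)*u = 0) := by
    apply Finset.filter_congr; intro u _; push_neg; tauto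
  rw [hneg] at hsplit
  have hbad := bad_count h2 A B hA hB
  have hs2 : ((univ.filter (fun u : F =>
        u ≠ 0 ∧ u ≠ 1 ∧ 1 + A*u ≠ 0 ∧ 1 + A*u + B ≠ 0 ∧ 1 + (A+B)*u ≠ 0)).card : ℤ)
      + ((univ.filter (fun u : F => u = 0 ∨ u = 1 ∨ 1 + A*u = 0 ∨ 1 + A*u + B = 0 ∨ 1 + (A+B)*u = 0)).card : ℤ)
      = (Fintype.card F : ℤ) := by exact_mod_cast hsplit
  linarith
end Inner

/-- for an odd prime `p` and a primitive element `β` of `F_{p^g}`, the number of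
tuples `(a,b,i,j)` with `a,b ∈ F_p^*`, `1 ≤ i,j ≤ p^g - 2`, `i ≠ j` and
`1 + a·β^i + b·β^j = 0` equals `(p-1)²(p^g-2) - (p-2)(3p-5)`. -/
theorem stmt_6 (p g : ℕ) [Fact p.Prime] (hp : Odd p) (hg : 0 < g)
    (F : Type) [Field F] [Fintype F] [Algebra (ZMod p) F]
    (hcard : Fintype.card F = p ^ g)
    (β : F) (hβ : ∀ x : F, x ≠ 0 → ∃ k : ℕ, β ^ k = x) :
    (Nat.card {x : ZMod p × ZMod p × ℕ × ℕ //
        x.1 ≠ 0 ∧ x.2.1 ≠ 0 ∧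
        1 ≤ x.2.2.1 ∧ x.2.2.1 ≤ p ^ g - 2 ∧
        1 ≤ x.2.2.2 ∧ x.2.2.2 ≤ p ^ g - 2 ∧
        x.2.2.1 ≠ x.2.2.2 ∧
        1 + algebraMap (ZMod p) F x.1 * β ^ x.2.2.1
          + algebraMap (ZMod p) F x.2.1 * β ^ x.2.2.2 = 0} : ℤ)
      = ((p : ℤ) - 1) ^ 2 * ((p : ℤ) ^ g - 2) - ((p : ℤ) - 2) * (3 * (p : ℤ) - 5) := by
  classical
  have hprime : p.Prime := Fact.out
  have hp2 : p ≠ 2 := by rintro rfl; rw [Nat.odd_iff] at hp; omega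
  have hp3 : 3 ≤ p := by have := hprime.two_le; omega
  have hq3 : 3 ≤ p ^ g := le_trans hp3 (Nat.le_self_pow hg.ne' p)
  set q : ℕ := p ^ g with hqdef
  have hinj : Function.Injective (algebraMap (ZMod p) F) := (algebraMap (ZMod p) F).injective
  have h2F : (2 : F) ≠ 0 := by
    have h2z : (2 : ZMod p) ≠ 0 := by
      intro h
      have h' : ((2:ℕ) : ZMod p) = 0 := by exact_mod_cast h
      rw [ZMod.natCast_eq_zero_iff] at h'
      have := Nat.le_of_dvd (by norm_num) h'
      omega
    intro h
    apply h2z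
    apply hinj
    rw [map_ofNat, map_zero]
    exact h
  -- basic facts about β
  have hβ0 : β ≠ 0 := by
    intro hb
    obtain ⟨k, hk⟩ := hβ (-1) (neg_ne_zero.mpr one_ne_zero)
    rw [hb] at hk
    rcases Nat.eq_zero_or_pos k with rfl | hkpos
    · rw [pow_zero] at hk; exact h2F (by linear_combination hk)
    · rw [zero_pow hkpos.ne'] at hk
      exact one_ne_zero (by linear_combination hk)
  set u0 : Fˣ := Units.mk0 β hβ0 with hu0def
  have hu0v : (u0 : F) = β := rfl
  have hord : orderOf u0 = q - 1 := by
    rw [orderOf_eq_card_of_forall_mem_zpowers, Nat.card_eq_fintype_card,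
      Fintype.card_units (α := F), hcard]
    intro x
    obtain ⟨k, hk⟩ := hβ x (Units.ne_zero x)
    exact Subgroup.mem_zpowers_iff.mpr ⟨(k:ℤ), by rw [zpow_natCast]; exact Units.ext (by rw [Units.val_pow_eq_pow_val]; exact hk)⟩
  have hmodpow : ∀ k, β ^ (k % (q-1)) = β ^ k := by
    intro k
    rw [show ∀ i, β ^ i = ((u0 ^ i : Fˣ) : F) from fun i => (Units.val_pow_eq_pow_val u0 i).symm,
      show β ^ k = ((u0 ^ k : Fˣ) : F) from (Units.val_pow_eq_pow_val u0 k).symm]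
    congr 1
    rw [← hord]
    exact pow_mod_orderOf u0 k
  have hβne1 : ∀ i, 1 ≤ i → i ≤ q - 2 → β ^ i ≠ 1 := by
    intro i h1 h2' hcontr
    have hu : u0 ^ i = 1 := Units.ext (by rw [Units.val_pow_eq_pow_val]; exact hcontr)
    have hdvd := orderOf_dvd_of_pow_eq_one hu
    rw [hord] at hdvd
    have := Nat.le_of_dvd (by omega) hdvd
    omega
  have hβinj : ∀ i j, i ≤ q - 2 → j ≤ q - 2 → β ^ i = β ^ j → i = j := by
    intro i j hi hj hij
    have hu : u0 ^ i = u0 ^ j := Units.ext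
      (by rw [Units.val_pow_eq_pow_val, Units.val_pow_eq_pow_val]; exact hij)
    have hmod := pow_eq_pow_iff_modEq.mp hu
    rw [hord, Nat.ModEq, Nat.mod_eq_of_lt (by omega), Nat.mod_eq_of_lt (by omega)] at hmod
    exact hmod
  have hidx : ∀ u : F, u ≠ 0 → u ≠ 1 → ∃ i, 1 ≤ i ∧ i ≤ q - 2 ∧ β ^ i = u := by
    intro u hune0 hune1
    obtain ⟨k, hk⟩ := hβ u hune0
    have hlt : k % (q-1) < q - 1 := Nat.mod_lt _ (by omega)
    refine ⟨k % (q-1), ?_, by omega, by rw [hmodpow]; exact hk⟩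
    rcases Nat.eq_zero_or_pos (k % (q-1)) with h0 | h; swap
    · exact h
    exfalso
    apply hune1
    have hc := hmodpow k
    rw [h0, pow_zero] at hc
    rw [← hk, ← hc]
  -- the target predicate on (a, b, u)
  set PZ : ZMod p × ZMod p × F → Prop := fun y =>
    y.1 ≠ 0 ∧ y.2.1 ≠ 0 ∧ y.2.2 ≠ 0 ∧ y.2.2 ≠ 1 ∧
    1 + algebraMap (ZMod p) F y.1 * y.2.2 ≠ 0 ∧
    1 + algebraMap (ZMod p) F y.1 * y.2.2 + algebraMap (ZMod p) F y.2.1 ≠ 0 ∧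
    1 + (algebraMap (ZMod p) F y.1 + algebraMap (ZMod p) F y.2.1) * y.2.2 ≠ 0 with hPZ
  have hbij : Nat.card {x : ZMod p × ZMod p × ℕ × ℕ //
        x.1 ≠ 0 ∧ x.2.1 ≠ 0 ∧
        1 ≤ x.2.2.1 ∧ x.2.2.1 ≤ p ^ g - 2 ∧
        1 ≤ x.2.2.2 ∧ x.2.2.2 ≤ p ^ g - 2 ∧
        x.2.2.1 ≠ x.2.2.2 ∧
        1 + algebraMap (ZMod p) F x.1 * β ^ x.2.2.1
          + algebraMap (ZMod p) F x.2.1 * β ^ x.2.2.2 = 0}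
      = Nat.card {y : ZMod p × ZMod p × F // PZ y} := by
    apply Nat.card_eq_of_bijective (fun x =>
      ⟨(x.1.1, x.1.2.1, β ^ x.1.2.2.1), by
        obtain ⟨⟨a, b, i, j⟩, ha, hb, hi1, hi2, hj1, hj2, hij, heq⟩ := x
        dsimp only at *
        refine ⟨ha, hb, pow_ne_zero _ hβ0, hβne1 i hi1 hi2, ?_, ?_, ?_⟩
        · intro h
          have hz : algebraMap (ZMod p) F b * β ^ j = 0 := by linear_combination heq - h
          rcases mul_eq_zero.1 hz with h' | h'
          · exact (map_ne_zero _).mpr hb h'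
          · exact pow_ne_zero j hβ0 h'
        · intro h
          have hz : algebraMap (ZMod p) F b * β ^ j = algebraMap (ZMod p) F b * 1 := by
            linear_combination heq - h
          exact hβne1 j hj1 hj2 (mul_left_cancel₀ ((map_ne_zero _).mpr hb) hz)
        · intro h
          have hz : algebraMap (ZMod p) F b * β ^ j = algebraMap (ZMod p) F b * β ^ i := by
            linear_combination heq - h
          exact hij (hβinj i j hi2 hj2 (mul_left_cancel₀ ((map_ne_zero _).mpr hb) hz).symm)⟩)
    constructor
    · rintro ⟨⟨a, b, i, j⟩, ha, hb, hi1, hi2, hj1, hj2, hij, heq⟩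
        ⟨⟨a', b', i', j'⟩, ha', hb', hi1', hi2', hj1', hj2', hij', heq'⟩ hfe
      simp only [Subtype.mk.injEq, Prod.mk.injEq] at hfe
      obtain ⟨rfl, rfl, hbe⟩ := hfe
      have hie : i = i' := hβinj i i' hi2 hi2' hbe
      subst hie
      have hje : j = j' := by
        apply hβinj j j' hj2 hj2'
        have hz : algebraMap (ZMod p) F b * β ^ j = algebraMap (ZMod p) F b * β ^ j' := by
          linear_combination heq - heq'
        exact mul_left_cancel₀ ((map_ne_zero _).mpr hb) hz
      subst hje
      rfl
    · rintro ⟨⟨a, b, u⟩, ha, hb, hu0', hu1, h3', h4', h5'⟩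
      set A : F := algebraMap (ZMod p) F a with hA
      set B : F := algebraMap (ZMod p) F b with hB
      have hBne : B ≠ 0 := (map_ne_zero _).mpr hb
      set v : F := (-(1 + A * u)) * B⁻¹ with hv
      have hBv : B * v = -(1 + A * u) := by
        rw [hv]; field_simp
      have hv0 : v ≠ 0 := by
        intro h; rw [h, mul_zero] at hBv; exact h3' (by linear_combination hBv)
      have hv1 : v ≠ 1 := by
        intro h; rw [h, mul_one] at hBv; exact h4' (by linear_combination hBv)
      have hvu : v ≠ u := by
        intro h
        exact h5' (by linear_combination hBv - B * h)
      obtain ⟨i, hi1, hi2, hki⟩ := hidx u hu0' hu1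
      obtain ⟨j, hj1, hj2, hkj⟩ := hidx v hv0 hv1
      have hij : i ≠ j := by
        intro h; subst h; rw [hki] at hkj; exact hvu hkj.symm
      refine ⟨⟨(a, b, i, j), ha, hb, hi1, hi2, hj1, hj2, hij, ?_⟩, ?_⟩
      · show 1 + A * β ^ i + B * β ^ j = 0
        linear_combination A * hki + B * hkj + hBv
      · apply Subtype.ext
        show (a, b, β ^ i) = (a, b, u)
        rw [hki]
  rw [hbij, Nat.card_eq_fintype_card, Fintype.card_subtype]
  -- translation of conditions along algebraMap
  have hmapm1 : (-1:F) = algebraMap (ZMod p) F (-1) := by rw [map_neg, map_one]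
  have hA1 : ∀ a : ZMod p, (algebraMap (ZMod p) F a = -1) = (a = -1) := fun a =>
    propext (by rw [hmapm1]; exact hinj.eq_iff)
  have hS1 : ∀ a b : ZMod p,
      (algebraMap (ZMod p) F a + algebraMap (ZMod p) F b = -1) = (a + b = -1) := fun a b =>
    propext (by rw [← map_add, hmapm1]; exact hinj.eq_iff)
  have hS0 : ∀ a b : ZMod p,
      (algebraMap (ZMod p) F a + algebraMap (ZMod p) F b = 0) = (a + b = 0) := fun a b =>
    propext (by rw [← map_add, show (0:F) = algebraMap (ZMod p) F 0 from (map_zero _).symm]; exact hinj.eq_iff)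
  have hiteA : ∀ a : ZMod p, (if algebraMap (ZMod p) F a = -1 then (1:ℤ) else 0)
      = (if a = -1 then 1 else 0) := fun a => if_congr (iff_of_eq (hA1 a)) rfl rfl
  have hiteS1 : ∀ a b : ZMod p,
      (if algebraMap (ZMod p) F a + algebraMap (ZMod p) F b = -1 then (1:ℤ) else 0)
      = (if a + b = -1 then 1 else 0) := fun a b => if_congr (iff_of_eq (hS1 a b)) rfl rfl
  have hiteS0 : ∀ a b : ZMod p,
      (if algebraMap (ZMod p) F a + algebraMap (ZMod p) F b = 0 then (1:ℤ) else 0)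
      = (if a + b = 0 then 1 else 0) := fun a b => if_congr (iff_of_eq (hS0 a b)) rfl rfl
  have hne10 : (-1 : ZMod p) ≠ 0 := by
    intro h; exact one_ne_zero (by linear_combination -h : (1 : ZMod p) = 0)
  set s : Finset (ZMod p) := univ.filter (fun a => a ≠ 0) with hsdef
  have hmem_s : ∀ a : ZMod p, a ∈ s ↔ a ≠ 0 := by intro a; simp [hsdef]
  have hscard : s.card = p - 1 := by
    rw [hsdef, Finset.filter_ne', Finset.card_erase_of_mem (mem_univ 0),
      Finset.card_univ, ZMod.card]
  have hkey : ∀ a b : ZMod p, (∑ u : F, if PZ (a, b, u) then (1:ℤ) else 0)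
      = if a ≠ 0 then (if b ≠ 0 then ((q:ℤ) - 5 + (if a = -1 then 1 else 0)
          + (if b = -1 then 1 else 0) + 2*(if a+b = -1 then 1 else 0)
          + (if a+b = 0 then 1 else 0)) else 0) else 0 := by
    intro a b
    by_cases ha : a = 0
    · simp [hPZ, ha]
    by_cases hb : b = 0
    · simp [hPZ, ha, hb]
    rw [if_pos ha, if_pos hb]
    have hAne : algebraMap (ZMod p) F a ≠ 0 := (map_ne_zero _).mpr ha
    have hBne : algebraMap (ZMod p) F b ≠ 0 := (map_ne_zero _).mpr hb
    have h := inner_count h2F (algebraMap (ZMod p) F a) (algebraMap (ZMod p) F b) hAne hBne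
    rw [hcard] at h
    calc (∑ u : F, if PZ (a, b, u) then (1:ℤ) else 0)
        = ((univ.filter (fun u : F => u ≠ 0 ∧ u ≠ 1
            ∧ 1 + algebraMap (ZMod p) F a * u ≠ 0
            ∧ 1 + algebraMap (ZMod p) F a * u + algebraMap (ZMod p) F b ≠ 0
            ∧ 1 + (algebraMap (ZMod p) F a + algebraMap (ZMod p) F b) * u ≠ 0)).card : ℤ) := by
          rw [← Finset.sum_boole]
          exact Finset.sum_congr rfl (fun u _ => if_congr (by simp [hPZ, ha, hb]) rfl rfl)
      _ = _ := by
          rw [h, hiteA a, hiteA b, hiteS1 a b, hiteS0 a b]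
  calc ((univ.filter PZ).card : ℤ)
      = ∑ a : ZMod p, ∑ b : ZMod p, ∑ u : F, (if PZ (a, b, u) then (1:ℤ) else 0) := by
        rw [Finset.card_filter]
        push_cast
        rw [Fintype.sum_prod_type]
        exact Finset.sum_congr rfl (fun a _ => Fintype.sum_prod_type _)
    _ = ∑ a : ZMod p, ∑ b : ZMod p, (if a ≠ 0 then (if b ≠ 0 then ((q:ℤ) - 5
          + (if a = -1 then 1 else 0) + (if b = -1 then 1 else 0)
          + 2*(if a+b = -1 then 1 else 0) + (if a+b = 0 then 1 else 0)) else 0) else 0) := by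
        exact Finset.sum_congr rfl (fun a _ => Finset.sum_congr rfl (fun b _ => hkey a b))
    _ = ∑ a ∈ s, ∑ b ∈ s, ((q:ℤ) - 5
          + (if a = -1 then 1 else 0) + (if b = -1 then 1 else 0)
          + 2*(if a+b = -1 then 1 else 0) + (if a+b = 0 then 1 else 0)) := by
        rw [Finset.sum_filter]
        apply Finset.sum_congr rfl
        intro a _
        by_cases ha : a = 0
        · simp [ha]
        · rw [if_pos ha, Finset.sum_filter]
          exact Finset.sum_congr rfl (fun b _ => if_pos ha)
    _ = ∑ a ∈ s, (((p:ℤ)-1) * ((q:ℤ)-5) + 2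
          + ((p:ℤ)-1) * (if a = -1 then 1 else 0) + 2*(if a = -1 then 0 else 1)) := by
        apply Finset.sum_congr rfl
        intro a ha
        have e1 : ∑ b ∈ s, (if b = -1 then (1:ℤ) else 0) = 1 := by
          rw [Finset.sum_ite_eq' s (-1) (fun _ => (1:ℤ)), if_pos ((hmem_s (-1)).mpr hne10)]
        have e2 : ∑ b ∈ s, (if a + b = -1 then (1:ℤ) else 0) = (if a = -1 then 0 else 1) := by
          have hc : ∀ b : ZMod p, (a + b = -1) = (b = -1 - a) := fun b =>
            propext ⟨fun h => by linear_combination h, fun h => by linear_combination h⟩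
          simp only [hc]
          rw [Finset.sum_ite_eq' s (-1 - a) (fun _ => (1:ℤ))]
          by_cases ham : a = -1
          · rw [if_pos ham, if_neg]
            simp [hmem_s, ham]
          · rw [if_neg ham, if_pos]
            rw [hmem_s]
            intro h; exact ham (by linear_combination -h)
        have e3 : ∑ b ∈ s, (if a + b = 0 then (1:ℤ) else 0) = 1 := by
          have hc : ∀ b : ZMod p, (a + b = 0) = (b = -a) := fun b =>
            propext ⟨fun h => by linear_combination h, fun h => by linear_combination h⟩
          simp only [hc]
          rw [Finset.sum_ite_eq' s (-a) (fun _ => (1:ℤ)), if_pos]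
          rw [hmem_s]
          exact neg_ne_zero.mpr ((hmem_s a).mp ha)
        rw [Finset.sum_add_distrib, Finset.sum_add_distrib, Finset.sum_add_distrib,
          Finset.sum_const, hscard, e1, e3, ← Finset.mul_sum, e2]
        have hpc : ((p - 1 : ℕ) : ℤ) = (p:ℤ) - 1 := by
          have := hp3; omega
        rw [nsmul_eq_mul, hpc]
        ring
    _ = ((p : ℤ) - 1) ^ 2 * ((p : ℤ) ^ g - 2) - ((p : ℤ) - 2) * (3 * (p : ℤ) - 5) := by
        have e4 : ∑ a ∈ s, (if a = -1 then (1:ℤ) else 0) = 1 := by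
          rw [Finset.sum_ite_eq' s (-1) (fun _ => (1:ℤ)), if_pos ((hmem_s (-1)).mpr hne10)]
        have e5 : ∑ a ∈ s, (if a = -1 then (0:ℤ) else 1) = ((p:ℤ) - 1) - 1 := by
          have hc : ∀ a : ZMod p, (if a = -1 then (0:ℤ) else 1) = 1 - (if a = -1 then 1 else 0) := by
            intro a; split_ifs <;> ring
          simp only [hc]
          rw [Finset.sum_sub_distrib, e4, Finset.sum_const, hscard, nsmul_eq_mul]
          have hpc : ((p - 1 : ℕ) : ℤ) = (p:ℤ) - 1 := by
            have := hp3; omega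
          rw [hpc]; ring
        rw [Finset.sum_add_distrib, Finset.sum_add_distrib, Finset.sum_add_distrib,
          Finset.sum_const, Finset.sum_const, hscard, ← Finset.mul_sum, e4,
          ← Finset.mul_sum, e5, nsmul_eq_mul, nsmul_eq_mul]
        have hpc : ((p - 1 : ℕ) : ℤ) = (p:ℤ) - 1 := by
          have := hp3; omega
        have hqc : ((q : ℕ) : ℤ) = (p:ℤ) ^ g := by
          rw [hqdef]; push_cast; ring
        rw [hpc, hqc]
        ring
end

section
/- Let q = 2^m, γ a primitive element of F_q, t a positive integer, and C_{1,t} the binary cyclic code of length n = q - 1 consisting of words c with c(γ) = c(γ^t) = 0. Then C_{1,t} contains a codeword of Hamming weight 3 if and only if the polynomial U_t(x) = 1 + x^t + (1+x)^t ∈ F_2[x] has a root in F_q \ {0, 1}. -/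
open Polynomial in
/-- `C_{1,t}` has a weight-3 codeword iff `U_t(x) = 1 + x^t + (1+x)^t` has a
root in `F_q \ {0,1}`. -/
theorem stmt_7 (m t : ℕ) (hm : 0 < m) (ht : 0 < t)
    (F : Type) [Field F] [Fintype F] [Algebra (ZMod 2) F]
    (hcard : Fintype.card F = 2 ^ m)
    (γ : F) (hγ : ∀ x : F, x ≠ 0 → ∃ k : ℕ, γ ^ k = x)
    (n : ℕ) (hn : n = 2 ^ m - 1) :
    (∃ c : Fin n → ZMod 2,
        (∑ i : Fin n, algebraMap (ZMod 2) F (c i) * γ ^ (i : ℕ) = 0) ∧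
        (∑ i : Fin n, algebraMap (ZMod 2) F (c i) * γ ^ (t * (i : ℕ)) = 0) ∧
        (Finset.univ.filter fun i => c i ≠ 0).card = 3) ↔
      ∃ x : F, x ≠ 0 ∧ x ≠ 1 ∧
        Polynomial.aeval x (1 + X ^ t + (1 + X) ^ t : Polynomial (ZMod 2)) = 0 := by
  classical
  have h2F : (2 : F) = 0 := by
    have h1 : ((2 : ℕ) : F) = algebraMap (ZMod 2) F ((2 : ℕ) : ZMod 2) :=
      (map_natCast _ 2).symm
    have h2 : ((2 : ℕ) : ZMod 2) = 0 := by decide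
    rw [h2, map_zero] at h1
    exact_mod_cast h1
  rcases eq_or_lt_of_le (show 1 ≤ m from hm) with hm1 | hm2
  · -- m = 1 : both sides are false
    have hn1 : n = 1 := by rw [← hm1] at hn; simpa using hn
    constructor
    · rintro ⟨c, -, -, hc3⟩
      have : (Finset.univ.filter fun i => c i ≠ 0).card ≤ Fintype.card (Fin n) :=
        le_trans (Finset.card_filter_le _ _) (by simp)
      rw [hc3, Fintype.card_fin] at this
      omega
    · rintro ⟨x, hx0, hx1, -⟩
      exfalso
      apply hx1
      have := FiniteField.pow_card_sub_one_eq_one x hx0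
      rw [hcard, ← hm1] at this
      simpa using this
  · -- m ≥ 2
    have hq4 : 4 ≤ 2 ^ m := by
      calc (4:ℕ) = 2 ^ 2 := rfl
      _ ≤ 2 ^ m := Nat.pow_le_pow_right (by norm_num) hm2
    have hn3 : 3 ≤ n := by omega
    have hnpos : 0 < n := by omega
    have hγ0 : γ ≠ 0 := by
      intro h
      have hsub : (Finset.univ : Finset F) ⊆ {0, 1} := by
        intro x _
        by_cases hx : x = 0
        · simp [hx]
        · obtain ⟨k, hk⟩ := hγ x hx
          cases k with
          | zero => simp [← hk]
          | succ k => rw [h] at hk; simp [pow_succ] at hk; exact absurd hk.symm hx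
      have := Finset.card_le_card hsub
      have h2 : ({0, 1} : Finset F).card ≤ 2 := Finset.card_insert_le _ _ |>.trans (by simp)
      rw [Finset.card_univ, hcard] at this
      omega
    have hγn : γ ^ n = 1 := by
      rw [hn, ← hcard]
      exact FiniteField.pow_card_sub_one_eq_one γ hγ0
    have hfin : IsOfFinOrder γ := isOfFinOrder_iff_pow_eq_one.2 ⟨n, hnpos, hγn⟩
    have hdpos : 0 < orderOf γ := hfin.orderOf_pos
    have hdvd : orderOf γ ∣ n := orderOf_dvd_of_pow_eq_one hγn
    have hle : n ≤ orderOf γ := by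
      set d := orderOf γ with hd
      have himg : (Finset.univ.erase (0 : F)) ⊆
          Finset.image (fun k : Fin d => γ ^ (k : ℕ)) Finset.univ := by
        intro x hx
        have hx0 : x ≠ 0 := Finset.ne_of_mem_erase hx
        obtain ⟨k, hk⟩ := hγ x hx0
        refine Finset.mem_image.2 ⟨⟨k % d, Nat.mod_lt _ hdpos⟩, Finset.mem_univ _, ?_⟩
        show γ ^ (k % d) = x
        rw [hd, pow_mod_orderOf, hk]
      have h1 : (Finset.univ.erase (0 : F)).card = Fintype.card F - 1 := by
        rw [Finset.card_erase_of_mem (Finset.mem_univ _), Finset.card_univ]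
      have h2 := Finset.card_le_card himg
      have h3 : (Finset.image (fun k : Fin d => γ ^ (k : ℕ)) Finset.univ).card ≤ d := by
        refine le_trans (Finset.card_image_le) (by simp)
      rw [h1, hcard, ← hn] at h2
      omega
    have horder : orderOf γ = n := le_antisymm (Nat.le_of_dvd hnpos hdvd) hle
    have hinj : ∀ i j : ℕ, i < n → j < n → γ ^ i = γ ^ j → i = j := by
      have key : ∀ i j : ℕ, i ≤ j → j < n → γ ^ i = γ ^ j → i = j := by
        intro i j hij hjn he
        have h1 : γ ^ i * γ ^ (j - i) = γ ^ i * 1 := by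
          rw [← pow_add, Nat.add_sub_cancel' hij, mul_one, he]
        have h2 : γ ^ (j - i) = 1 := mul_left_cancel₀ (pow_ne_zero _ hγ0) h1
        have h3 : orderOf γ ∣ j - i := orderOf_dvd_of_pow_eq_one h2
        rw [horder] at h3
        rcases Nat.eq_zero_or_pos (j - i) with h4 | h4
        · omega
        · have := Nat.le_of_dvd h4 h3
          omega
      intro i j hi hj he
      rcases le_total i j with h | h
      · exact key i j h hj he
      · exact (key j i h hi he.symm).symm
    constructor
    · -- forward
      rintro ⟨c, hs1, hs2, hc3⟩
      obtain ⟨a, b, d, hab, had, hbd, hset⟩ := Finset.card_eq_three.1 hc3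
      have hval : ∀ z : ZMod 2, z ≠ 0 → z = 1 := by decide
      have hmem : ∀ i : Fin n, c i ≠ 0 ↔ i ∈ ({a, b, d} : Finset (Fin n)) := by
        intro i
        rw [← hset]
        simp
      have hone : ∀ i ∈ ({a, b, d} : Finset (Fin n)), c i = 1 := by
        intro i hi
        exact hval _ ((hmem i).2 hi)
      have key : ∀ g : Fin n → F,
          (∑ i : Fin n, algebraMap (ZMod 2) F (c i) * g i) = g a + g b + g d := by
        intro g
        rw [← Finset.sum_subset (Finset.subset_univ ({a, b, d} : Finset (Fin n)))]
        · rw [Finset.sum_insert (by simp [hab, had]), Finset.sum_pair hbd]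
          rw [hone a (by simp), hone b (by simp), hone d (by simp)]
          simp [add_assoc]
        · intro i _ hi
          have hci : c i = 0 := by
            by_contra h
            exact hi ((hmem i).1 h)
          rw [hci, map_zero, zero_mul]
      have hA : γ ^ (a : ℕ) + γ ^ (b : ℕ) + γ ^ (d : ℕ) = 0 := by
        rw [← key (fun i => γ ^ (i : ℕ))]; exact hs1
      have hB : γ ^ (t * (a : ℕ)) + γ ^ (t * (b : ℕ)) + γ ^ (t * (d : ℕ)) = 0 := by
        rw [← key (fun i => γ ^ (t * (i : ℕ)))]; exact hs2
      have hpa : γ ^ (a : ℕ) ≠ 0 := pow_ne_zero _ hγ0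
      have hpb : γ ^ (b : ℕ) ≠ 0 := pow_ne_zero _ hγ0
      have hpd : γ ^ (d : ℕ) ≠ 0 := pow_ne_zero _ hγ0
      refine ⟨γ ^ (b : ℕ) / γ ^ (a : ℕ), div_ne_zero hpb hpa, ?_, ?_⟩
      · intro h
        have : γ ^ (b : ℕ) = γ ^ (a : ℕ) := (div_eq_one_iff_eq hpa).1 h
        exact hab (Fin.ext (hinj _ _ b.isLt a.isLt this)).symm
      · have hy : (1 : F) + γ ^ (b : ℕ) / γ ^ (a : ℕ) = γ ^ (d : ℕ) / γ ^ (a : ℕ) := by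
          field_simp
          linear_combination hA - γ ^ (d : ℕ) * h2F
        simp only [map_add, map_one, map_pow, aeval_X, aeval_one]
        rw [hy]
        rw [mul_comm t (a:ℕ), mul_comm t (b:ℕ), mul_comm t (d:ℕ), pow_mul, pow_mul, pow_mul] at hB
        rw [div_pow, div_pow]
        field_simp
        linear_combination hB
    · -- backward
      rintro ⟨x, hx0, hx1, hU⟩
      have hU' : 1 + x ^ t + (1 + x) ^ t = 0 := by
        simpa using hU
      have hy0 : (1 : F) + x ≠ 0 := by
        intro h
        apply hx1
        linear_combination h - h2F
      obtain ⟨k, hk⟩ := hγ x hx0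
      obtain ⟨l, hl⟩ := hγ (1 + x) hy0
      have hpow : ∀ j : ℕ, γ ^ (j % n) = γ ^ j := by
        intro j
        conv_rhs => rw [← Nat.div_add_mod j n]
        rw [pow_add, pow_mul, hγn, one_pow, one_mul]
      set i0 : Fin n := ⟨0, hnpos⟩ with hi0
      set i1 : Fin n := ⟨k % n, Nat.mod_lt _ hnpos⟩ with hi1
      set i2 : Fin n := ⟨l % n, Nat.mod_lt _ hnpos⟩ with hi2
      have hg0 : γ ^ (i0 : ℕ) = 1 := by simp [hi0]
      have hg1 : γ ^ (i1 : ℕ) = x := by rw [hi1]; simpa [hpow k] using hk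
      have hg2 : γ ^ (i2 : ℕ) = 1 + x := by rw [hi2]; simpa [hpow l] using hl
      have h01 : i0 ≠ i1 := by
        intro h
        apply hx1
        rw [← hg1, ← h, hg0]
      have h02 : i0 ≠ i2 := by
        intro h
        apply hx0
        have h1x : γ ^ (i2 : ℕ) = 1 := by rw [← h, hg0]
        rw [hg2] at h1x
        linear_combination h1x
      have h12 : i1 ≠ i2 := by
        intro h
        have h1x : γ ^ (i2 : ℕ) = x := by rw [← h, hg1]
        rw [hg2] at h1x
        exact one_ne_zero (by linear_combination h1x)
      set s : Finset (Fin n) := {i0, i1, i2} with hs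
      have key : ∀ g : Fin n → F,
          (∑ i : Fin n, algebraMap (ZMod 2) F (if i ∈ s then (1 : ZMod 2) else 0) * g i)
            = g i0 + g i1 + g i2 := by
        intro g
        have hterm : ∀ i : Fin n, algebraMap (ZMod 2) F (if i ∈ s then (1 : ZMod 2) else 0) * g i
            = if i ∈ s then g i else 0 := by
          intro i
          by_cases h : i ∈ s <;> simp [h]
        simp_rw [hterm]
        rw [Finset.sum_ite_mem, Finset.univ_inter, hs,
          Finset.sum_insert (by simp [h01, h02]), Finset.sum_pair h12, add_assoc]
      refine ⟨fun i => if i ∈ s then 1 else 0, ?_, ?_, ?_⟩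
      · rw [key (fun i => γ ^ (i : ℕ)), hg0, hg1, hg2]
        linear_combination (1 + x) * h2F
      · have e0 : γ ^ (t * (i0 : ℕ)) = 1 := by simp [hi0]
        have e1 : γ ^ (t * (i1 : ℕ)) = x ^ t := by rw [mul_comm, pow_mul, hg1]
        have e2 : γ ^ (t * (i2 : ℕ)) = (1 + x) ^ t := by rw [mul_comm, pow_mul, hg2]
        rw [key (fun i => γ ^ (t * (i : ℕ))), e0, e1, e2]
        exact hU'
      · have hfe : (Finset.univ.filter fun i : Fin n =>
            (if i ∈ s then (1 : ZMod 2) else 0) ≠ 0) = s := by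
          ext i
          by_cases h : i ∈ s <;> simp [h]
        rw [hfe, hs, Finset.card_insert_of_notMem (by simp [h01, h02]),
          Finset.card_pair h12]
end

section
/- Let q = 2^m and t a positive integer. The binary cyclic code C_{1,t} of length q - 1 has minimum distance equal to 3 if and only if gcd(U_t(x), x^q + x) ≠ x(x+1) in F_2[x], where U_t(x) = 1 + x^t + (1+x)^t. -/
open Polynomial



private lemma zmod2_eq_one : ∀ x : ZMod 2, x ≠ 0 → x = 1 := by decide

private lemma charF (F : Type) [Field F] [Algebra (ZMod 2) F] : CharP F 2 :=
  charP_of_injective_ringHom (algebraMap (ZMod 2) F).injective 2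

private lemma rhs_iff (m t : ℕ) (hm : 0 < m) (ht : 0 < t) (F : Type) [Field F] [Fintype F]
    [Algebra (ZMod 2) F] (hcard : Fintype.card F = 2 ^ m) :
    EuclideanDomain.gcd (1 + X ^ t + (1 + X) ^ t : Polynomial (ZMod 2))
        (X ^ (2 ^ m) + X) ≠ X * (X + 1) ↔
      ∃ x : F, x ≠ 0 ∧ x ≠ 1 ∧ aeval x (1 + X ^ t + (1 + X) ^ t : Polynomial (ZMod 2)) = 0 := by
  classical
  haveI : CharP F 2 := charF F
  set P : Polynomial (ZMod 2) := 1 + X ^ t + (1 + X) ^ t with hP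
  set Q : Polynomial (ZMod 2) := X ^ (2 ^ m) + X with hQ
  have hXC : (X + 1 : Polynomial (ZMod 2)) = X - C 1 := by
    rw [map_one, CharTwo.sub_eq_add]
  have hXP : X ∣ P := by
    have : (X - C 0 : Polynomial (ZMod 2)) ∣ P := by
      rw [dvd_iff_isRoot]
      simp [hP, IsRoot, zero_pow ht.ne']
      decide
    simpa using this
  have hX1P : (X + 1 : Polynomial (ZMod 2)) ∣ P := by
    rw [hXC, dvd_iff_isRoot]
    simp [hP, IsRoot]
    rw [show (1 : ZMod 2) + 1 = 0 by decide, zero_pow ht.ne']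
    decide
  have h2m : (2:ℕ)^m ≠ 0 := by positivity
  have hXQ : X ∣ Q := dvd_add (dvd_pow_self X h2m) dvd_rfl
  have hX1Q : (X + 1 : Polynomial (ZMod 2)) ∣ Q := by
    rw [hXC, dvd_iff_isRoot]
    simp [hQ, IsRoot]
    decide
  have hcop : IsCoprime (X : Polynomial (ZMod 2)) (X + 1) := by
    refine ⟨1, 1, ?_⟩
    rw [one_mul, one_mul, ← add_assoc, CharTwo.add_self_eq_zero, zero_add]
  set g : Polynomial (ZMod 2) := EuclideanDomain.gcd P Q with hg
  have hdvdg : X * (X + 1) ∣ g :=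
    EuclideanDomain.dvd_gcd (hcop.mul_dvd hXP hX1P) (hcop.mul_dvd hXQ hX1Q)
  have h2m1 : (1:ℕ) ≠ 2 ^ m := (Nat.one_lt_two_pow_iff.mpr hm.ne').ne
  have hQ0 : Q ≠ 0 := fun h0 => by
    have := congrArg (fun p => coeff p 1) h0
    simp [hQ, coeff_X_pow, h2m1] at this
  set φ := algebraMap (ZMod 2) F with hφ
  have hlt : 1 < Fintype.card F := by rw [hcard]; exact Nat.one_lt_two_pow_iff.mpr hm.ne'
  constructor
  · intro hne
    obtain ⟨h, hgh⟩ := hdvdg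
    have hg0 : g ≠ 0 := fun h0 => hQ0 ((EuclideanDomain.gcd_eq_zero_iff.mp h0).2)
    have hh0 : h ≠ 0 := by rintro rfl; rw [mul_zero] at hgh; exact hg0 hgh
    have hh1 : h ≠ 1 := by rintro rfl; rw [mul_one] at hgh; exact hne hgh
    have hdeg : h.degree ≠ 0 := by
      intro hd
      have hC := Polynomial.eq_C_of_degree_le_zero hd.le
      rcases eq_or_ne (h.coeff 0) 0 with h0 | h0
      · exact hh0 (by rw [hC, h0, map_zero])
      · exact hh1 (by rw [hC, zmod2_eq_one _ h0, map_one])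
    have hhg : h ∣ g := ⟨X * (X + 1), by rw [hgh, mul_comm]⟩
    have hgQ : g ∣ Q := EuclideanDomain.gcd_dvd_right P Q
    have hgP : g ∣ P := EuclideanDomain.gcd_dvd_left P Q
    have hQmap : Q.map φ = X ^ Fintype.card F - X := by
      simp only [hQ, Polynomial.map_add, Polynomial.map_pow, Polynomial.map_X]
      rw [hcard, CharTwo.sub_eq_add]
    have hroots := FiniteField.roots_X_pow_card_sub_X F
    have hQF0 : (X ^ Fintype.card F - X : F[X]) ≠ 0 :=
      FiniteField.X_pow_card_sub_X_ne_zero F hlt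
    have hsplits : Splits (X ^ Fintype.card F - X : F[X]) := by
      rw [splits_iff_card_roots, hroots, FiniteField.X_pow_card_sub_X_natDegree_eq F hlt]
      exact Finset.card_univ
    have hhQF : h.map φ ∣ (X ^ Fintype.card F - X : F[X]) := by
      rw [← hQmap]; exact Polynomial.map_dvd φ (hhg.trans hgQ)
    have hgQF : g.map φ ∣ (X ^ Fintype.card F - X : F[X]) := by
      rw [← hQmap]; exact Polynomial.map_dvd φ hgQ
    have hhsplit : Splits (h.map φ) :=
      Splits.of_dvd hsplits hQF0 hhQF
    have hdegmap : (h.map φ).degree ≠ 0 := by rwa [Polynomial.degree_map]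
    obtain ⟨α, hα⟩ := Splits.exists_eval_eq_zero hhsplit hdegmap
    have hα' : (h.map φ).eval α = 0 := hα
    have hgmap : g.map φ = X * (X + 1) * h.map φ := by
      rw [hgh]
      simp [Polynomial.map_mul, Polynomial.map_add, Polynomial.map_one, Polynomial.map_X]
    have hnotsq : ∀ a : F, ¬ ((X - C a) ^ 2 ∣ (X ^ Fintype.card F - X : F[X])) := by
      intro a hdvd
      have h2 : 2 ≤ rootMultiplicity a (X ^ Fintype.card F - X : F[X]) :=
        (le_rootMultiplicity_iff hQF0).mpr hdvd
      rw [← count_roots, hroots] at h2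
      have := Multiset.nodup_iff_count_le_one.mp Finset.univ.nodup a
      omega
    have hα0 : α ≠ 0 := by
      rintro rfl
      have hXh : (X - C (0:F)) ∣ h.map φ := dvd_iff_isRoot.mpr hα'
      obtain ⟨h2, hh2⟩ := hXh
      refine hnotsq 0 (dvd_trans ?_ hgQF)
      refine ⟨(X + 1) * h2, ?_⟩
      simp only [map_zero, sub_zero] at hh2 ⊢
      rw [hgmap, hh2]
      ring
    have hα1 : α ≠ 1 := by
      rintro rfl
      have hXh : (X - C (1:F)) ∣ h.map φ := dvd_iff_isRoot.mpr hα'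
      obtain ⟨h2, hh2⟩ := hXh
      refine hnotsq 1 (dvd_trans ?_ hgQF)
      refine ⟨X * h2, ?_⟩
      rw [hgmap, hh2, map_one, CharTwo.sub_eq_add]
      ring
    refine ⟨α, hα0, hα1, ?_⟩
    obtain ⟨k, hk⟩ := hgP
    have : P.map φ = g.map φ * k.map φ := by rw [hk, Polynomial.map_mul]
    have hPα : (P.map φ).eval α = 0 := by
      rw [this, eval_mul, hgmap, eval_mul, hα', mul_zero, zero_mul]
    rwa [eval_map, ← aeval_def] at hPα
  · rintro ⟨x, hx0, hx1, hxP⟩ heq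
    have hQx : aeval x Q = 0 := by
      simp only [hQ, map_add, map_pow, aeval_X]
      rw [← hcard, FiniteField.pow_card, CharTwo.add_self_eq_zero]
    have hgx : aeval x g = 0 := by
      rw [hg, EuclideanDomain.gcd_eq_gcd_ab P Q]
      simp [map_add, map_mul, hxP, hQx]
    rw [heq] at hgx
    simp only [map_mul, map_add, aeval_X, map_one] at hgx
    rcases mul_eq_zero.mp hgx with h0 | h0
    · exact hx0 h0
    · exact hx1 (by rwa [CharTwo.add_eq_iff_eq_add, zero_add] at h0)




private lemma pow_le_inj (F : Type) [Field F] [Fintype F] (γ : F)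
    (hγ : ∀ x : F, x ≠ 0 → ∃ k : ℕ, γ ^ k = x) (hγ0 : γ ≠ 0)
    {i j : ℕ} (hle : i ≤ j) (hj : j < Fintype.card F - 1) (h : γ ^ i = γ ^ j) : i = j := by
  classical
  by_contra hne
  set d := j - i with hd
  have hd0 : 0 < d := by omega
  have hγd : γ ^ d = 1 := by
    have h2 : γ ^ i * γ ^ d = γ ^ i * 1 := by
      rw [mul_one, ← pow_add, show i + d = j by omega, h]
    exact mul_left_cancel₀ (pow_ne_zero i hγ0) h2
  have hsub : (Finset.univ.filter (fun x : F => x ≠ 0)) ⊆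
      (Finset.range d).image (γ ^ ·) := by
    intro x hx
    obtain ⟨k, hk⟩ := hγ x (Finset.mem_filter.mp hx).2
    refine Finset.mem_image.mpr ⟨k % d, Finset.mem_range.mpr (Nat.mod_lt k hd0), ?_⟩
    rw [← hk]
    conv_rhs => rw [← Nat.div_add_mod k d]
    rw [pow_add, pow_mul, hγd, one_pow, one_mul]
  have hc : (Finset.univ.filter (fun x : F => x ≠ 0)).card = Fintype.card F - 1 := by
    rw [Finset.filter_ne', Finset.card_erase_of_mem (Finset.mem_univ 0), Finset.card_univ]
  have h1 : Fintype.card F - 1 ≤ d := by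
    calc Fintype.card F - 1 = _ := hc.symm
      _ ≤ ((Finset.range d).image (γ ^ ·)).card := Finset.card_le_card hsub
      _ ≤ d := le_trans Finset.card_image_le (by simp)
  omega

private lemma pow_inj (F : Type) [Field F] [Fintype F] (γ : F)
    (hγ : ∀ x : F, x ≠ 0 → ∃ k : ℕ, γ ^ k = x) (hγ0 : γ ≠ 0)
    {i j : ℕ} (hi : i < Fintype.card F - 1) (hj : j < Fintype.card F - 1)
    (h : γ ^ i = γ ^ j) : i = j := by
  rcases le_total i j with hle | hle
  · exact pow_le_inj F γ hγ hγ0 hle hj h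
  · exact (pow_le_inj F γ hγ hγ0 hle hi h.symm).symm



open Polynomial in
/-- `C_{1,t}` has minimum distance `3` iff
`gcd(U_t(x), x^q + x) ≠ x(x+1)` in `F_2[x]`. -/
theorem stmt_9 (m t : ℕ) (hm : 0 < m) (ht : 0 < t)
    (F : Type) [Field F] [Fintype F] [Algebra (ZMod 2) F]
    (hcard : Fintype.card F = 2 ^ m)
    (γ : F) (hγ : ∀ x : F, x ≠ 0 → ∃ k : ℕ, γ ^ k = x)
    (n : ℕ) (hn : n = 2 ^ m - 1) :
    sInf {w : ℕ | ∃ c : Fin n → ZMod 2,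
        (∑ i : Fin n, algebraMap (ZMod 2) F (c i) * γ ^ (i : ℕ) = 0) ∧
        (∑ i : Fin n, algebraMap (ZMod 2) F (c i) * γ ^ (t * (i : ℕ)) = 0) ∧
        c ≠ 0 ∧ (Finset.univ.filter fun i => c i ≠ 0).card = w} = 3 ↔
      EuclideanDomain.gcd (1 + X ^ t + (1 + X) ^ t : Polynomial (ZMod 2))
          (X ^ (2 ^ m) + X) ≠ X * (X + 1) := by
  classical
  haveI : CharP F 2 := charF F
  rw [rhs_iff m t hm ht F hcard]
  set S : Set ℕ := {w : ℕ | ∃ c : Fin n → ZMod 2,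
        (∑ i : Fin n, algebraMap (ZMod 2) F (c i) * γ ^ (i : ℕ) = 0) ∧
        (∑ i : Fin n, algebraMap (ZMod 2) F (c i) * γ ^ (t * (i : ℕ)) = 0) ∧
        c ≠ 0 ∧ (Finset.univ.filter fun i => c i ≠ 0).card = w} with hS
  have hncard : n = Fintype.card F - 1 := by rw [hn, hcard]
  have hn1 : 1 ≤ n := by
    rw [hn]
    have : 2 ≤ 2 ^ m := Nat.one_lt_two_pow_iff.mpr hm.ne'
    omega
  have hsum : ∀ (c : Fin n → ZMod 2) (f : Fin n → F),
      (∑ i : Fin n, algebraMap (ZMod 2) F (c i) * f i)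
        = ∑ i ∈ Finset.univ.filter (fun i => c i ≠ 0), f i := by
    intro c f
    rw [← Finset.sum_filter_of_ne (p := fun i => c i ≠ 0)
      (fun x _ hgx hc => hgx (by rw [hc, map_zero, zero_mul]))]
    refine Finset.sum_congr rfl fun i hi => ?_
    rw [zmod2_eq_one _ (Finset.mem_filter.mp hi).2, map_one, one_mul]
  -- γ nonzero given a point outside {0,1}
  have hγ0_of : ∀ y : F, y ≠ 0 → y ≠ 1 → γ ≠ 0 := by
    intro y hy0 hy1
    obtain ⟨k', hk'⟩ := hγ y hy0
    rintro rfl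
    rcases Nat.eq_zero_or_pos k' with rfl | hk0
    · rw [pow_zero] at hk'; exact hy1 hk'.symm
    · rw [zero_pow hk0.ne'] at hk'; exact hy0 hk'.symm
  constructor
  · -- min distance 3 → root
    intro hInf
    have hSne : S.Nonempty := by
      by_contra hne
      rw [Set.not_nonempty_iff_eq_empty] at hne
      rw [hne, Nat.sInf_empty] at hInf
      omega
    have h3 : 3 ∈ S := hInf ▸ Nat.sInf_mem hSne
    obtain ⟨c, hc1, hc2, hcne, hw⟩ := h3
    obtain ⟨i, j, k, hij, hik, hjk, hs⟩ := Finset.card_eq_three.mp hw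
    rw [hsum c, hs, Finset.sum_insert (by simp [hij, hik]),
      Finset.sum_insert (by simp [hjk]), Finset.sum_singleton] at hc1 hc2
    rw [mul_comm t (i:ℕ), mul_comm t (j:ℕ), mul_comm t (k:ℕ),
      pow_mul, pow_mul, pow_mul] at hc2
    rw [← add_assoc] at hc1 hc2
    -- n ≥ 2
    have hvij : (i:ℕ) ≠ (j:ℕ) := fun h => hij (Fin.val_injective h)
    have hn2 : 2 ≤ n := by
      have := i.isLt; have := j.isLt; omega
    have hy : ∃ y : F, y ≠ 0 ∧ y ≠ 1 := by
      by_contra hy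
      push_neg at hy
      have hsub : (Finset.univ : Finset F) ⊆ {0, 1} := by
        intro y _
        rcases eq_or_ne y 0 with rfl | h0
        · simp
        · simp [hy y h0]
      have h1 := Finset.card_le_card hsub
      rw [Finset.card_univ] at h1
      have h2 : ({0, 1} : Finset F).card ≤ 2 :=
        (Finset.card_insert_le _ _).trans (by simp)
      omega
    obtain ⟨y, hy0, hy1⟩ := hy
    have hγ0 : γ ≠ 0 := hγ0_of y hy0 hy1
    have hγpow0 : ∀ l : ℕ, γ ^ l ≠ 0 := fun l => pow_ne_zero l hγ0
    have hane : γ ^ (i:ℕ) ≠ γ ^ (k:ℕ) := by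
      intro h
      exact hik (Fin.val_injective (pow_inj F γ hγ hγ0
        (by rw [← hncard]; exact i.isLt) (by rw [← hncard]; exact k.isLt) h))
    set a := γ ^ (i:ℕ) with ha
    set b := γ ^ (j:ℕ) with hb
    set cc := γ ^ (k:ℕ) with hcc
    have hbval : cc + a = b := by
      have h2 := congrArg (fun z => z + (a + cc)) hc1
      simp only [zero_add] at h2
      calc cc + a = a + cc := add_comm _ _
        _ = a + b + cc + (a + cc) := h2.symm
        _ = b + (a + a) + (cc + cc) := by ring
        _ = b := by
            rw [CharTwo.add_self_eq_zero, CharTwo.add_self_eq_zero, add_zero, add_zero]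
    have hcct : cc ^ t ≠ 0 := pow_ne_zero _ (hγpow0 _)
    refine ⟨a / cc, div_ne_zero (hγpow0 _) (hγpow0 _), ?_, ?_⟩
    · intro h
      exact hane ((div_eq_one_iff_eq (hγpow0 _)).mp h)
    · simp only [map_add, map_one, map_pow, aeval_X]
      have h1x : 1 + a / cc = b / cc := by
        rw [← div_self (hγpow0 (k:ℕ)), ← add_div, hbval]
      rw [h1x, div_pow, div_pow, ← div_self hcct, ← add_div, ← add_div,
        _root_.div_eq_zero_iff]
      left
      calc cc ^ t + a ^ t + b ^ t = a ^ t + b ^ t + cc ^ t := by ring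
        _ = 0 := hc2
  · -- root → min distance 3
    rintro ⟨x, hx0, hx1, hxP⟩
    simp only [map_add, map_one, map_pow, aeval_X] at hxP
    have hγ0 : γ ≠ 0 := hγ0_of x hx0 hx1
    have hγpow0 : ∀ l : ℕ, γ ^ l ≠ 0 := fun l => pow_ne_zero l hγ0
    have hγn : γ ^ n = 1 := by
      rw [hncard]; exact FiniteField.pow_card_sub_one_eq_one γ hγ0
    have hmod : ∀ l : ℕ, γ ^ (l % n) = γ ^ l := by
      intro l
      conv_rhs => rw [← Nat.div_add_mod l n]
      rw [pow_add, pow_mul, hγn, one_pow, one_mul]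
    have hx1' : x + 1 ≠ 0 := by
      intro h; exact hx1 (by rwa [CharTwo.add_eq_iff_eq_add, zero_add] at h)
    obtain ⟨ka, hka⟩ := hγ x hx0
    obtain ⟨kb, hkb⟩ := hγ (x + 1) hx1'
    set ia : Fin n := ⟨ka % n, Nat.mod_lt _ (by omega)⟩ with hia
    set ib : Fin n := ⟨kb % n, Nat.mod_lt _ (by omega)⟩ with hib
    set ic : Fin n := ⟨0, by omega⟩ with hic
    have hga : γ ^ (ia : ℕ) = x := by rw [hia]; exact (hmod ka).trans hka
    have hgb : γ ^ (ib : ℕ) = x + 1 := by rw [hib]; exact (hmod kb).trans hkb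
    have hgc : γ ^ (ic : ℕ) = 1 := by rw [hic]; exact pow_zero γ
    have hxx1 : x ≠ x + 1 := by
      intro h
      exact zero_ne_one (add_left_cancel (a := x) (b := (0:F)) (c := 1)
        (by rw [add_zero]; exact h))
    have hab : ia ≠ ib := fun h => hxx1 (by rw [← hgb, ← hga, h])
    have hac : ia ≠ ic := fun h => hx1 (by rw [← hga, h, hgc])
    have hbc : ib ≠ ic := by
      intro h
      apply hx0
      have := hgb
      rw [h, hgc] at this
      have h2 := congrArg (fun z => z + 1) this.symm
      simpa [add_assoc, CharTwo.add_self_eq_zero] using h2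
    obtain ⟨c, hcdef⟩ : ∃ c : Fin n → ZMod 2,
        c = fun l => if l ∈ ({ia, ib, ic} : Finset (Fin n)) then 1 else 0 := ⟨_, rfl⟩
    have hfilter : Finset.univ.filter (fun l => c l ≠ 0) = {ia, ib, ic} := by
      ext l
      simp only [Finset.mem_filter, Finset.mem_univ, true_and, hcdef]
      split_ifs with h
      · simp [h]
      · simp [h]
    have h3S : 3 ∈ S := by
      refine ⟨c, ?_, ?_, ?_, ?_⟩
      · rw [hsum c, hfilter, Finset.sum_insert (by simp [hab, hac]),
          Finset.sum_insert (by simp [hbc]), Finset.sum_singleton, hga, hgb, hgc]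
        rw [show x + (x + 1 + 1) = (x + x) + (1 + 1) by ring,
          CharTwo.add_self_eq_zero, CharTwo.add_self_eq_zero, add_zero]
      · rw [hsum c, hfilter, Finset.sum_insert (by simp [hab, hac]),
          Finset.sum_insert (by simp [hbc]), Finset.sum_singleton,
          mul_comm t (ia:ℕ), mul_comm t (ib:ℕ), mul_comm t (ic:ℕ),
          pow_mul, pow_mul, pow_mul, hga, hgb, hgc, one_pow]
        rw [show x ^ t + ((x + 1) ^ t + 1) = 1 + x ^ t + (1 + x) ^ t by ring]
        exact hxP
      · intro h0
        have h1 : c ia = 0 := congrFun h0 ia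
        rw [hcdef] at h1
        simp only [Finset.mem_insert, Finset.mem_singleton, true_or, if_true] at h1
        exact one_ne_zero h1
      · rw [hfilter]
        exact Finset.card_eq_three.mpr ⟨ia, ib, ic, hab, hac, hbc, rfl⟩
    have hlb : ∀ w ∈ S, 3 ≤ w := by
      rintro w ⟨c', hc1, hc2, hcne, hwc⟩
      by_contra hlt
      push_neg at hlt
      obtain ⟨s', hs'⟩ : ∃ s', s' = Finset.univ.filter (fun i => c' i ≠ 0) := ⟨_, rfl⟩
      rw [← hs'] at hwc
      have h0 : s'.card ≠ 0 := by
        intro hz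
        apply hcne
        funext l
        by_contra hl
        have hmem : l ∈ s' := by
          rw [hs']; exact Finset.mem_filter.mpr ⟨Finset.mem_univ l, hl⟩
        rw [Finset.card_eq_zero] at hz
        rw [hz] at hmem
        exact absurd hmem (Finset.notMem_empty l)
      have hcases : s'.card = 1 ∨ s'.card = 2 := by omega
      rcases hcases with h1 | h2
      · obtain ⟨i0, hi0⟩ := Finset.card_eq_one.mp h1
        rw [hsum c', ← hs', hi0, Finset.sum_singleton] at hc1
        exact hγpow0 _ hc1
      · obtain ⟨i0, j0, hij0, hs0⟩ := Finset.card_eq_two.mp h2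
        rw [hsum c', ← hs', hs0, Finset.sum_insert (by simp [hij0]),
          Finset.sum_singleton] at hc1
        have heq : γ ^ (i0:ℕ) = γ ^ (j0:ℕ) := by
          rwa [CharTwo.add_eq_iff_eq_add, zero_add] at hc1
        exact hij0 (Fin.val_injective (pow_inj F γ hγ hγ0
          (by rw [← hncard]; exact i0.isLt) (by rw [← hncard]; exact j0.isLt) heq))
    exact le_antisymm (Nat.sInf_le h3S) (le_csInf ⟨3, h3S⟩ hlb)
end

section
/- Let q = 2^m and t a positive integer such that the binary cyclic code C_{1,t} of length q - 1 has no codewords of weight 1 or 2. Then the number of codewords of Hamming weight 3 in C_{1,t} equals (q-1)·(deg(gcd(U_t(x), x^q + x)) - 2)/6, where U_t(x) = 1 + x^t + (1+x)^t ∈ F_2[x]. -/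
open Polynomial Finset

lemma zmod2_eq_one_s12 {a : ZMod 2} (h : a ≠ 0) : a = 1 := by revert h; revert a; decide

lemma sum_indicator {n : ℕ} {F : Type} [Field F] [Algebra (ZMod 2) F]
    (c : Fin n → ZMod 2) (f : Fin n → F) :
    ∑ i : Fin n, algebraMap (ZMod 2) F (c i) * f i
      = ∑ i ∈ Finset.univ.filter (fun i => c i ≠ 0), f i := by
  rw [← Finset.sum_filter_of_ne (p := fun i => c i ≠ 0)
    (fun x _ hx hc => hx (by rw [hc, map_zero, zero_mul]))]
  exact Finset.sum_congr rfl fun i hi => by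
    rw [zmod2_eq_one_s12 (Finset.mem_filter.mp hi).2, map_one, one_mul]

lemma filter_indicator {n : ℕ} (s : Finset (Fin n)) :
    (Finset.univ.filter fun i => (if i ∈ s then (1 : ZMod 2) else 0) ≠ 0) = s := by
  ext i
  by_cases h : i ∈ s <;> simp [h]

lemma partA (m t : ℕ) (hm : 0 < m) (ht : 0 < t)
    (F : Type) [Field F] [Fintype F] [DecidableEq F] [Algebra (ZMod 2) F]
    (hcard : Fintype.card F = 2 ^ m) :
    (EuclideanDomain.gcd (1 + X ^ t + (1 + X) ^ t : Polynomial (ZMod 2))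
        (X ^ (2 ^ m) + X)).natDegree
      = (Finset.univ.filter (fun w : F => 1 + w ^ t + (1 + w) ^ t = 0)).card := by
  haveI : CharP F 2 := charP_of_injective_algebraMap (algebraMap (ZMod 2) F).injective 2
  set U : Polynomial (ZMod 2) := 1 + X ^ t + (1 + X) ^ t with hU
  set P : Polynomial (ZMod 2) := X ^ (2 ^ m) + X with hP
  set g := EuclideanDomain.gcd U P with hg
  have hP0 : P ≠ 0 := by
    have : P.Monic := by
      rw [hP]
      refine Polynomial.monic_X_pow_add ?_
      rw [Polynomial.degree_X]
      exact_mod_cast Nat.one_lt_two_pow_iff.mpr hm.ne'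
    exact this.ne_zero
  have hPsep : P.Separable := by
    have hd : derivative P = 1 := by
      rw [hP, derivative_add, derivative_X_pow, derivative_X]
      have h2 : ((2 : ℕ) : ZMod 2) = 0 := by decide
      rw [Nat.cast_pow, h2, zero_pow hm.ne']
      simp
    rw [Polynomial.Separable, hd]
    exact isCoprime_one_right
  have hPsplits : Splits (P.map (algebraMap (ZMod 2) F)) := by
    rw [splits_iff_card_roots]
    have hmap : P.map (algebraMap (ZMod 2) F) = X ^ Fintype.card F - X := by
      rw [hP, Polynomial.map_add, Polynomial.map_pow, map_X, hcard, sub_eq_add_neg,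
        CharTwo.neg_eq]
    rw [hmap, FiniteField.roots_X_pow_card_sub_X]
    rw [FiniteField.X_pow_card_sub_X_natDegree_eq]
    · simp
    · rw [hcard]; exact Nat.one_lt_pow hm.ne' one_lt_two
  have hgU : g ∣ U := EuclideanDomain.gcd_dvd_left U P
  have hgP : g ∣ P := EuclideanDomain.gcd_dvd_right U P
  have hg0 : g ≠ 0 := by
    intro h
    exact hP0 ((EuclideanDomain.gcd_eq_zero_iff).mp h).2
  have hgsep : g.Separable := hPsep.of_dvd hgP
  have hgsplits : Splits (g.map (algebraMap (ZMod 2) F)) :=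
    hPsplits.of_dvd (Polynomial.map_ne_zero hP0) (Polynomial.map_dvd _ hgP)
  have h1 : Fintype.card (g.rootSet F) = g.natDegree :=
    card_rootSet_eq_natDegree hgsep hgsplits
  have hPz : ∀ w : F, aeval w P = 0 := by
    intro w
    rw [hP]
    simp only [map_add, map_pow, aeval_X]
    have hw : w ^ (2 ^ m) = w := by rw [← hcard]; exact FiniteField.pow_card w
    rw [hw]
    exact CharTwo.add_self_eq_zero w
  have hroot : ∀ w : F, aeval w g = 0 ↔ 1 + w ^ t + (1 + w) ^ t = 0 := by
    intro w
    have hUval : aeval w U = 1 + w ^ t + (1 + w) ^ t := by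
      simp [hU, map_add, map_pow, aeval_X, map_one]
    constructor
    · intro h
      obtain ⟨c, hc⟩ := hgU
      rw [← hUval, hc, map_mul, h, zero_mul]
    · intro h
      rw [hg, EuclideanDomain.gcd_eq_gcd_ab U P]
      simp only [map_add, map_mul]
      have hU0 : aeval w U = 0 := by rw [hUval]; exact h
      rw [hU0, hPz w]
      ring
  have h2 : (g.rootSet F).toFinset
      = Finset.univ.filter (fun w : F => 1 + w ^ t + (1 + w) ^ t = 0) := by
    ext w
    simp [Set.mem_toFinset, mem_rootSet, hg0, hroot w]
  rw [← h1, ← Set.toFinset_card, h2]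

open Polynomial in
/-- if `C_{1,t}` has no codewords of weight 1 or 2, then the number of its
weight-3 codewords equals `(q-1)·(deg(gcd(U_t, x^q + x)) - 2)/6`. -/
theorem stmt_12 (m t : ℕ) (hm : 0 < m) (ht : 0 < t)
    (F : Type) [Field F] [Fintype F] [Algebra (ZMod 2) F]
    (hcard : Fintype.card F = 2 ^ m)
    (γ : F) (hγ : ∀ x : F, x ≠ 0 → ∃ k : ℕ, γ ^ k = x)
    (n : ℕ) (hn : n = 2 ^ m - 1)
    (hno12 : ¬ ∃ c : Fin n → ZMod 2,
        (∑ i : Fin n, algebraMap (ZMod 2) F (c i) * γ ^ (i : ℕ) = 0) ∧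
        (∑ i : Fin n, algebraMap (ZMod 2) F (c i) * γ ^ (t * (i : ℕ)) = 0) ∧
        ((Finset.univ.filter fun i => c i ≠ 0).card = 1 ∨
          (Finset.univ.filter fun i => c i ≠ 0).card = 2)) :
    6 * Nat.card {c : Fin n → ZMod 2 //
        (∑ i : Fin n, algebraMap (ZMod 2) F (c i) * γ ^ (i : ℕ) = 0) ∧
        (∑ i : Fin n, algebraMap (ZMod 2) F (c i) * γ ^ (t * (i : ℕ)) = 0) ∧
        (Finset.univ.filter fun i => c i ≠ 0).card = 3}
      = (2 ^ m - 1) *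
        ((EuclideanDomain.gcd (1 + X ^ t + (1 + X) ^ t : Polynomial (ZMod 2))
            (X ^ (2 ^ m) + X)).natDegree - 2) := by
  classical
  haveI : CharP F 2 := charP_of_injective_algebraMap (algebraMap (ZMod 2) F).injective 2
  have h2F : (2 : F) = 0 := CharTwo.two_eq_zero
  -- rewrite gcd degree via partA
  rw [partA m t hm ht F hcard]
  set W' : Finset F := univ.filter (fun w : F => 1 + w ^ t + (1 + w) ^ t = 0) with hW'
  set W : Finset F := univ.filter
      (fun w : F => w ≠ 0 ∧ w ≠ 1 ∧ 1 + w ^ t + (1 + w) ^ t = 0) with hWdef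
  -- W'.card - 2 = W.card
  have h11 : (1 : F) + 1 = 0 := by linear_combination h2F
  have hzero_mem : (0 : F) ∈ W' := by
    have hval0 : 1 + (0 : F) ^ t + (1 + 0 : F) ^ t = 0 := by
      simpa [zero_pow ht.ne'] using h11
    simp only [hW', mem_filter, mem_univ, true_and]
    exact hval0
  have hone_mem : (1 : F) ∈ W'.erase 0 := by
    refine Finset.mem_erase.mpr ⟨one_ne_zero, ?_⟩
    have hval1 : 1 + (1 : F) ^ t + (1 + 1 : F) ^ t = 0 := by
      simp only [one_pow, h11, zero_pow ht.ne', add_zero]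
    simp only [hW', mem_filter, mem_univ, true_and]
    exact hval1
  have hWW' : W = (W'.erase 0).erase 1 := by
    ext w
    simp only [hWdef, hW', mem_filter, mem_univ, true_and, Finset.mem_erase]
    tauto
  have hWcard : W.card = W'.card - 2 := by
    rw [hWW', Finset.card_erase_of_mem hone_mem, Finset.card_erase_of_mem hzero_mem]
    omega
  rw [← hWcard]
  -- now goal : 6 * Nat.card ... = (2^m - 1) * W.card
  by_cases hγ0 : γ = 0
  · -- degenerate case : F = {0, 1}
    have hsub : ∀ x : F, x = 0 ∨ x = 1 := by
      intro x
      by_cases hx : x = 0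
      · exact Or.inl hx
      · obtain ⟨k, hk⟩ := hγ x hx
        rcases Nat.eq_zero_or_pos k with hk0 | hk0
        · right; rw [← hk, hk0, pow_zero]
        · exact absurd (by rw [← hk, hγ0, zero_pow hk0.ne']) hx
    have hWe : W = ∅ := by
      rw [Finset.eq_empty_iff_forall_notMem]
      intro w hw
      rw [hWdef, mem_filter] at hw
      rcases hsub w with h | h
      · exact hw.2.1 h
      · exact hw.2.2.1 h
    have hle : Fintype.card F ≤ 2 := by
      have hsubs : (univ : Finset F) ⊆ {0, 1} := fun x _ => by
        rcases hsub x with h | h <;> simp [h]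
      calc Fintype.card F = (univ : Finset F).card := (Finset.card_univ).symm
        _ ≤ ({0, 1} : Finset F).card := Finset.card_le_card hsubs
        _ ≤ 2 := (Finset.card_insert_le _ _).trans (by simp)
    have hn1 : n = 1 := by
      have hm1 : m = 1 := by
        by_contra h
        have h2m : 2 ≤ m := by omega
        have : 2 ^ 2 ≤ 2 ^ m := Nat.pow_le_pow_right (by norm_num) h2m
        omega
      rw [hn, hm1]
      norm_num
    rw [hWe, Finset.card_empty, Nat.mul_zero, Nat.mul_eq_zero]
    right
    rw [Nat.card_eq_zero]
    left
    rw [isEmpty_subtype]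
    rintro c ⟨-, -, h3⟩
    have hle1 : (Finset.univ.filter fun i => c i ≠ 0).card ≤ 1 := by
      calc (Finset.univ.filter fun i => c i ≠ 0).card ≤ (univ : Finset (Fin n)).card :=
            Finset.card_filter_le _ _
        _ = n := by rw [Finset.card_univ, Fintype.card_fin]
        _ = 1 := hn1
    omega
  · -- main case : γ is a primitive element
    set u : Fˣ := Units.mk0 γ hγ0 with hu
    have huval : ∀ k : ℕ, ((u ^ k : Fˣ) : F) = γ ^ k := by
      intro k; rw [Units.val_pow_eq_pow_val]; rfl
    have hgen : ∀ x : Fˣ, x ∈ Subgroup.zpowers u := by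
      intro x
      obtain ⟨k, hk⟩ := hγ (x : F) (Units.ne_zero x)
      exact Subgroup.mem_zpowers_iff.mpr ⟨(k : ℤ), Units.ext (by rw [zpow_natCast, huval, hk])⟩
    have hord : orderOf u = n := by
      rw [orderOf_eq_card_of_forall_mem_zpowers hgen, Nat.card_eq_fintype_card,
        Fintype.card_units, hcard, hn]
    have h2m1 : 1 < 2 ^ m := Nat.one_lt_pow hm.ne' one_lt_two
    have hn0 : 0 < n := by rw [hn]; omega
    have hinj : ∀ i j : Fin n, γ ^ (i : ℕ) = γ ^ (j : ℕ) → i = j := by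
      intro i j hij
      have h1 : u ^ (i : ℕ) = u ^ (j : ℕ) := Units.ext (by rw [huval, huval, hij])
      rw [pow_eq_pow_iff_modEq, hord] at h1
      have hi := Nat.mod_eq_of_lt i.isLt
      have hj := Nat.mod_eq_of_lt j.isLt
      unfold Nat.ModEq at h1
      exact Fin.ext (by omega)
    have hpowne : ∀ i : Fin n, γ ^ (i : ℕ) ≠ 0 := fun i => pow_ne_zero _ hγ0
    have hsurj : ∀ z : F, z ≠ 0 → ∃ i : Fin n, γ ^ (i : ℕ) = z := by
      intro z hz
      obtain ⟨k, hk⟩ := hγ z hz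
      refine ⟨⟨k % n, Nat.mod_lt _ hn0⟩, ?_⟩
      have h1 : u ^ (k % orderOf u) = u ^ k := pow_mod_orderOf u k
      rw [hord] at h1
      have h2 := congrArg Units.val h1
      rw [huval, huval] at h2
      exact h2.trans hk
    -- the three finite sets
    set S3 : Finset (Finset (Fin n)) := univ.filter (fun s => s.card = 3 ∧
        (∑ i ∈ s, γ ^ (i : ℕ) = 0) ∧ (∑ i ∈ s, γ ^ (t * (i : ℕ)) = 0)) with hS3
    set Q : Finset (Fin n × Fin n) := univ.filter (fun p => p.1 ≠ p.2 ∧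
        (γ ^ (p.1 : ℕ) + γ ^ (p.2 : ℕ)) ^ t
          = γ ^ (t * (p.1 : ℕ)) + γ ^ (t * (p.2 : ℕ))) with hQdef
    have sum3 : ∀ (f : Fin n → F) (i j k : Fin n), i ≠ j → i ≠ k → j ≠ k →
        ∑ x ∈ ({i, j, k} : Finset (Fin n)), f x = f i + f j + f k := by
      intro f i j k hij hik hjk
      rw [Finset.sum_insert (by simp [hij, hik]),
        Finset.sum_insert (by simp [hjk]), Finset.sum_singleton, add_assoc]
    have hptw : ∀ i : Fin n, γ ^ (t * (i : ℕ)) = (γ ^ (i : ℕ)) ^ t := by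
      intro i; rw [← pow_mul, mul_comm]
    -- number of codewords = S3.card
    have hC : Nat.card {c : Fin n → ZMod 2 //
        (∑ i : Fin n, algebraMap (ZMod 2) F (c i) * γ ^ (i : ℕ) = 0) ∧
        (∑ i : Fin n, algebraMap (ZMod 2) F (c i) * γ ^ (t * (i : ℕ)) = 0) ∧
        (Finset.univ.filter fun i => c i ≠ 0).card = 3} = S3.card := by
      have e : {c : Fin n → ZMod 2 //
          (∑ i : Fin n, algebraMap (ZMod 2) F (c i) * γ ^ (i : ℕ) = 0) ∧
          (∑ i : Fin n, algebraMap (ZMod 2) F (c i) * γ ^ (t * (i : ℕ)) = 0) ∧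
          (Finset.univ.filter fun i => c i ≠ 0).card = 3} ≃ {s : Finset (Fin n) // s ∈ S3} := by
        refine ⟨fun c => ⟨univ.filter (fun i => c.1 i ≠ 0), ?_⟩,
          fun s => ⟨fun i => if i ∈ s.1 then 1 else 0, ?_⟩, ?_, ?_⟩
        · obtain ⟨c, h1, h2, h3⟩ := c
          rw [hS3, mem_filter]
          refine ⟨mem_univ _, h3, ?_, ?_⟩
          · rw [← sum_indicator c (fun i => γ ^ (i : ℕ))]; exact h1
          · rw [← sum_indicator c (fun i => γ ^ (t * (i : ℕ)))]; exact h2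
        · obtain ⟨s, hs⟩ := s
          rw [hS3, mem_filter] at hs
          obtain ⟨-, h3, h1, h2⟩ := hs
          refine ⟨?_, ?_, ?_⟩
          · rw [sum_indicator, filter_indicator]; exact h1
          · rw [sum_indicator, filter_indicator]; exact h2
          · rw [filter_indicator]; exact h3
        · intro c
          apply Subtype.ext
          funext i
          by_cases h : c.1 i = 0
          · simp [h]
          · simp [h, zmod2_eq_one_s12 h]
        · intro s
          exact Subtype.ext (filter_indicator s.1)
      rw [Nat.card_congr e, Nat.card_eq_fintype_card, Fintype.card_coe]
    -- third element of a triple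
    have third : ∀ s ∈ S3, ∀ i j : Fin n, i ∈ s → j ∈ s → i ≠ j →
        ∃ k : Fin n, k ≠ i ∧ k ≠ j ∧ s = {i, j, k} ∧
          γ ^ (k : ℕ) = γ ^ (i : ℕ) + γ ^ (j : ℕ) := by
      intro s hs i j hi hj hij
      rw [hS3, mem_filter] at hs
      obtain ⟨-, hc3, hs1, hs2⟩ := hs
      have hje : j ∈ s.erase i := Finset.mem_erase.mpr ⟨Ne.symm hij, hj⟩
      have hcard1 : ((s.erase i).erase j).card = 1 := by
        rw [Finset.card_erase_of_mem hje, Finset.card_erase_of_mem hi, hc3]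
      obtain ⟨k, hk⟩ := Finset.card_eq_one.mp hcard1
      have hkmem : k ∈ (s.erase i).erase j := by rw [hk]; exact Finset.mem_singleton_self k
      have hki : k ≠ i := (Finset.mem_erase.mp (Finset.mem_of_mem_erase hkmem)).1
      have hkj : k ≠ j := (Finset.mem_erase.mp hkmem).1
      have hseq : s = {i, j, k} := by
        have e1 : insert j ((s.erase i).erase j) = s.erase i := Finset.insert_erase hje
        have e2 : insert i (s.erase i) = s := Finset.insert_erase hi
        rw [← e2, ← e1, hk]
      have hsum : γ ^ (i : ℕ) + γ ^ (j : ℕ) + γ ^ (k : ℕ) = 0 := by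
        rw [hseq, sum3 _ i j k hij (Ne.symm hki) (Ne.symm hkj)] at hs1
        exact hs1
      exact ⟨k, hki, hkj, hseq,
        by linear_combination hsum - (γ ^ (i : ℕ) + γ ^ (j : ℕ)) * h2F⟩
    -- Q as a disjoint union over S3
    have hQ : Q = S3.biUnion (fun s => s.offDiag) := by
      ext p
      obtain ⟨i, j⟩ := p
      rw [hQdef, mem_filter, Finset.mem_biUnion]
      constructor
      · rintro ⟨-, hij, hcond⟩
        have hz : γ ^ (i : ℕ) + γ ^ (j : ℕ) ≠ 0 := by
          intro h
          refine hij (hinj i j ?_)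
          linear_combination h - γ ^ (j : ℕ) * h2F
        obtain ⟨k, hk⟩ := hsurj _ hz
        have hki : k ≠ i := by
          intro h
          rw [h] at hk
          have : γ ^ (j : ℕ) = 0 := by linear_combination -hk
          exact hpowne j this
        have hkj : k ≠ j := by
          intro h
          rw [h] at hk
          have : γ ^ (i : ℕ) = 0 := by linear_combination -hk
          exact hpowne i this
        refine ⟨{i, j, k}, ?_, ?_⟩
        · rw [hS3, mem_filter]
          refine ⟨mem_univ _, Finset.card_eq_three.mpr ⟨i, j, k, hij, Ne.symm hki, Ne.symm hkj, rfl⟩, ?_, ?_⟩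
          · rw [sum3 _ i j k hij (Ne.symm hki) (Ne.symm hkj)]
            linear_combination hk + (γ ^ (i : ℕ) + γ ^ (j : ℕ)) * h2F
          · rw [sum3 _ i j k hij (Ne.symm hki) (Ne.symm hkj)]
            have hkt : γ ^ (t * (k : ℕ)) = γ ^ (t * (i : ℕ)) + γ ^ (t * (j : ℕ)) := by
              rw [hptw k, hk, hcond]
            linear_combination hkt + (γ ^ (t * (i : ℕ)) + γ ^ (t * (j : ℕ))) * h2F
        · exact Finset.mem_offDiag.mpr ⟨by simp, by simp, hij⟩
      · rintro ⟨s, hs, hmem⟩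
        rw [Finset.mem_offDiag] at hmem
        obtain ⟨hi, hj, hij⟩ := hmem
        refine ⟨mem_univ _, hij, ?_⟩
        obtain ⟨k, hki, hkj, hseq, hkval⟩ := third s hs i j hi hj hij
        rw [hS3, mem_filter] at hs
        obtain ⟨-, -, -, hs2⟩ := hs
        rw [hseq, sum3 _ i j k hij (Ne.symm hki) (Ne.symm hkj)] at hs2
        have h1 : (γ ^ (i : ℕ) + γ ^ (j : ℕ)) ^ t = γ ^ (t * (k : ℕ)) := by
          rw [hptw k, hkval]
        rw [h1]
        linear_combination hs2 - (γ ^ (t * (i : ℕ)) + γ ^ (t * (j : ℕ))) * h2F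
    have hdisj : ∀ s ∈ S3, ∀ s' ∈ S3, s ≠ s' → Disjoint s.offDiag s'.offDiag := by
      intro s hs s' hs' hne
      rw [Finset.disjoint_left]
      rintro ⟨i, j⟩ hp hp'
      rw [Finset.mem_offDiag] at hp hp'
      obtain ⟨k, _, _, hseq, hkval⟩ := third s hs i j hp.1 hp.2.1 hp.2.2
      obtain ⟨k', _, _, hseq', hkval'⟩ := third s' hs' i j hp'.1 hp'.2.1 hp'.2.2
      have hkk : k = k' := hinj _ _ (hkval.trans hkval'.symm)
      exact hne (hseq.trans (by rw [hkk, ← hseq']))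
    have hQcard : Q.card = 6 * S3.card := by
      rw [hQ, Finset.card_biUnion hdisj]
      have h6 : ∀ s ∈ S3, s.offDiag.card = 6 := by
        intro s hs
        rw [hS3, mem_filter] at hs
        rw [Finset.offDiag_card, hs.2.1]
      rw [Finset.sum_congr rfl h6, Finset.sum_const, smul_eq_mul, mul_comm]
    -- Q.card = n * W.card
    have hQW : Q.card = n * W.card := by
      have hbij : Q.card = ((univ : Finset (Fin n)) ×ˢ W).card := by
        apply Finset.card_nbij (fun p => (p.1, γ ^ (p.2 : ℕ) * (γ ^ (p.1 : ℕ))⁻¹))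
        · rintro ⟨i, j⟩ hp
          rw [hQdef, Finset.mem_coe, mem_filter] at hp
          obtain ⟨-, hij, hcond⟩ := hp
          rw [Finset.mem_coe, Finset.mem_product]
          refine ⟨mem_univ _, ?_⟩
          rw [hWdef, mem_filter]
          set a := γ ^ (i : ℕ) with ha
          set b := γ ^ (j : ℕ) with hb
          have ha0 : a ≠ 0 := hpowne i
          have hb0 : b ≠ 0 := hpowne j
          refine ⟨mem_univ _, mul_ne_zero hb0 (inv_ne_zero ha0), ?_, ?_⟩
          · intro h
            rw [mul_inv_eq_one₀ ha0] at h
            exact hij (hinj i j (hb ▸ ha ▸ h).symm)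
          · have hcond' : (a + b) ^ t = a ^ t + b ^ t := by
              rw [← hptw i, ← hptw j]; exact hcond
            have h1w : 1 + b * a⁻¹ = (a + b) * a⁻¹ := by field_simp
            rw [h1w, mul_pow, mul_pow, hcond']
            have hat : a ^ t * (a⁻¹) ^ t = 1 := by
              rw [← mul_pow, mul_inv_cancel₀ ha0, one_pow]
            linear_combination hat + (1 + b ^ t * (a⁻¹) ^ t) * h2F
        · rintro ⟨i, j⟩ hp ⟨i', j'⟩ hp' heq
          rw [Prod.mk.injEq] at heq
          obtain ⟨h1, h2⟩ := heq
          subst h1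
          have : γ ^ (j : ℕ) = γ ^ (j' : ℕ) :=
            mul_right_cancel₀ (inv_ne_zero (hpowne i)) h2
          rw [hinj _ _ this]
        · rintro ⟨i, w⟩ hq
          rw [Finset.mem_coe, Finset.mem_product] at hq
          have hw := hq.2
          rw [hWdef, mem_filter] at hw
          obtain ⟨-, hw0, hw1, hwU⟩ := hw
          have hz : w * γ ^ (i : ℕ) ≠ 0 := mul_ne_zero hw0 (hpowne i)
          obtain ⟨j, hj⟩ := hsurj _ hz
          have hij : i ≠ j := by
            intro h
            have h1 : (1 : F) * γ ^ (i : ℕ) = w * γ ^ (i : ℕ) := by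
              rw [one_mul]
              conv_lhs => rw [h]
              exact hj
            exact hw1 (mul_right_cancel₀ (hpowne i) h1).symm
          refine ⟨(i, j), ?_, ?_⟩
          · rw [Finset.mem_coe, hQdef, mem_filter]
            refine ⟨mem_univ _, hij, ?_⟩
            have h1wt : (1 + w) ^ t = 1 + w ^ t := by
              linear_combination hwU - (1 + w ^ t) * h2F
            rw [hptw i, hptw j, hj]
            have hfact : γ ^ (i : ℕ) + w * γ ^ (i : ℕ) = (1 + w) * γ ^ (i : ℕ) := by ring
            rw [hfact, mul_pow, h1wt, mul_pow]
            ring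
          · have hval : γ ^ (j : ℕ) * (γ ^ (i : ℕ))⁻¹ = w := by
              rw [hj, mul_assoc, mul_inv_cancel₀ (hpowne i), mul_one]
            rw [Prod.mk.injEq]
            exact ⟨rfl, hval⟩
      rw [hbij, Finset.card_product, Finset.card_univ, Fintype.card_fin]
    rw [hC, ← hQcard, hQW, hn]
end

section
/- Let q = 2^m and t ≥ 3 such that x^{q} + x and U_t(x) = 1 + x^t + (1+x)^t share a common root in F_q \ {0,1} corresponding to some α = γ^i. Then for each root α = γ^i of U_t in F_q \ {0,1}, the word 1 + x^i + x^j, where γ^j = 1 + γ^i, is a codeword of weight 3 in C_{1,t}, and the roots come in pairs {γ^i, γ^j} producing the same codeword. -/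
open Polynomial in
/-- if `α = γ^i` is a root of `U_t` in `F_q \ {0,1}` and `γ^j = 1 + γ^i`,
then `1 + x^i + x^j` is a weight-3 codeword of `C_{1,t}`, and `γ^j` is also a root of `U_t`
(the roots pair up, producing the same codeword). -/
theorem stmt_13 (m t : ℕ) (hm : 0 < m) (ht : 3 ≤ t)
    (F : Type) [Field F] [Fintype F] [Algebra (ZMod 2) F]
    (hcard : Fintype.card F = 2 ^ m)
    (γ : F) (hγ : ∀ x : F, x ≠ 0 → ∃ k : ℕ, γ ^ k = x)
    (n : ℕ) (hn : n = 2 ^ m - 1)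
    (i j : ℕ) (hi : 0 < i) (hin : i < n) (hj : 0 < j) (hjn : j < n)
    (hne0 : γ ^ i ≠ 0) (hne1 : γ ^ i ≠ 1)
    (hroot : Polynomial.aeval (γ ^ i) (1 + X ^ t + (1 + X) ^ t : Polynomial (ZMod 2)) = 0)
    (hij : γ ^ j = 1 + γ ^ i)
    (c : Fin n → ZMod 2)
    (hc : ∀ k : Fin n, c k = if (k : ℕ) = 0 ∨ (k : ℕ) = i ∨ (k : ℕ) = j then 1 else 0) :
    (∑ k : Fin n, algebraMap (ZMod 2) F (c k) * γ ^ (k : ℕ) = 0) ∧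
    (∑ k : Fin n, algebraMap (ZMod 2) F (c k) * γ ^ (t * (k : ℕ)) = 0) ∧
    (Finset.univ.filter fun k => c k ≠ 0).card = 3 ∧
    Polynomial.aeval (γ ^ j) (1 + X ^ t + (1 + X) ^ t : Polynomial (ZMod 2)) = 0 := by
  -- characteristic 2
  have h2 : (1 + 1 : F) = 0 := by
    have h := (algebraMap (ZMod 2) F).map_add 1 1
    rw [show (1 + 1 : ZMod 2) = 0 from by decide] at h
    simpa using h.symm
  have hchar : ∀ x : F, x + x = 0 := by
    intro x
    have : x + x = (1 + 1) * x := by ring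
    rw [this, h2, zero_mul]
  have hji : (1 : F) + γ ^ j = γ ^ i := by
    rw [hij, ← add_assoc, h2, zero_add]
  have hsum0 : (1 : F) + γ ^ i + γ ^ j = 0 := by
    rw [hij]
    have : (1 : F) + γ ^ i + (1 + γ ^ i) = (1 + γ ^ i) + (1 + γ ^ i) := by ring
    rw [this, hchar]
  have hij' : i ≠ j := by
    intro h
    rw [← h] at hij
    exact one_ne_zero (right_eq_add.mp hij)
  have hn0 : 0 < n := lt_trans hi hin
  set a : Fin n := ⟨0, hn0⟩ with ha
  set b : Fin n := ⟨i, hin⟩ with hb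
  set d : Fin n := ⟨j, hjn⟩ with hd
  have hab : a ≠ b := by simp [ha, hb, Fin.ext_iff, hi.ne]
  have had : a ≠ d := by simp [ha, hd, Fin.ext_iff, hj.ne]
  have hbd : b ≠ d := by simp [hb, hd, Fin.ext_iff, hij']
  have key : ∀ e : ℕ → F,
      ∑ k : Fin n, algebraMap (ZMod 2) F (c k) * e (k : ℕ) = e 0 + e i + e j := by
    intro e
    have step : ∀ k : Fin n, algebraMap (ZMod 2) F (c k) * e (k : ℕ) =
        if k ∈ ({a, b, d} : Finset (Fin n)) then e (k : ℕ) else 0 := by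
      intro k
      have hcond : ((k : ℕ) = 0 ∨ (k : ℕ) = i ∨ (k : ℕ) = j) ↔
          k ∈ ({a, b, d} : Finset (Fin n)) := by
        simp [ha, hb, hd, Fin.ext_iff]
      rw [hc k]
      by_cases h : (k : ℕ) = 0 ∨ (k : ℕ) = i ∨ (k : ℕ) = j
      · rw [if_pos h, if_pos (hcond.mp h)]; simp
      · rw [if_neg h, if_neg (fun hh => h (hcond.mpr hh))]; simp
    rw [Finset.sum_congr rfl (fun k _ => step k), Finset.sum_ite_mem,
      Finset.univ_inter]
    rw [Finset.sum_insert (by simp [hab, had]),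
      Finset.sum_insert (by simp [hbd]), Finset.sum_singleton]
    simp [ha, hb, hd, add_assoc]
  -- simplify hroot
  have hroot' : (1 : F) + (γ ^ i) ^ t + (1 + γ ^ i) ^ t = 0 := by
    simpa using hroot
  refine ⟨?_, ?_, ?_, ?_⟩
  · rw [key (fun k => γ ^ k)]
    simpa using hsum0
  · rw [key (fun k => γ ^ (t * k))]
    have e1 : γ ^ (t * i) = (γ ^ i) ^ t := by rw [mul_comm, pow_mul]
    have e2 : γ ^ (t * j) = (γ ^ j) ^ t := by rw [mul_comm, pow_mul]
    simp only [Nat.mul_zero, pow_zero, e1, e2, hij]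
    exact hroot'
  · have : (Finset.univ.filter fun k => c k ≠ 0) = ({a, b, d} : Finset (Fin n)) := by
      ext k
      simp only [Finset.mem_filter, Finset.mem_univ, true_and, hc k]
      constructor
      · intro h
        by_cases hh : (k : ℕ) = 0 ∨ (k : ℕ) = i ∨ (k : ℕ) = j
        · simp [ha, hb, hd, Fin.ext_iff]; tauto
        · simp [hh] at h
      · intro h
        have : (k : ℕ) = 0 ∨ (k : ℕ) = i ∨ (k : ℕ) = j := by
          simp [ha, hb, hd, Fin.ext_iff] at h; tauto
        simp [this]
    rw [this, Finset.card_insert_of_notMem (by simp [hab, had]),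
      Finset.card_insert_of_notMem (by simp [hbd]), Finset.card_singleton]
  · simp only [map_add, map_one, map_pow, aeval_X]
    rw [hji]
    have : (1 : F) + (γ ^ j) ^ t + (γ ^ i) ^ t
        = (1 : F) + (γ ^ i) ^ t + (1 + γ ^ i) ^ t := by rw [hij]; ring
    rw [this, hroot']
end
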